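/- arXiv:1512.03228 — 5 statements merged into one kernel-verified Lean document; each statement's English description precedes it below -/
import Mathlib

section
/- Fix 0 < β < 1. The subtransfer operator T_β maps L¹(I₁) into L¹(I₁) with ‖T_β f‖_{L¹(I₁)} ≤ ‖f‖_{L¹(I₁)} for all f ∈ L¹(I₁), and for every f ∈ L¹(I₁) the iterates satisfy ‖T_β^N f‖_{L¹(I₁)} → 0 as N → +∞. -/
open MeasureTheory Set Filter

/-- The subtransfer operator `T_β f(x) = ∑_{j∈ℤ, j≠0} (β/(x+2j)²) f(-β/(x+2j))`. -/
noncomputable def Tsub (β : ℝ) (f : ℝ → ℝ) (x : ℝ) : ℝ :=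
  ∑' j : {j : ℤ // j ≠ 0},
    (β / (x + 2 * ((j : ℤ) : ℝ)) ^ 2) * f (-β / (x + 2 * ((j : ℤ) : ℝ)))

noncomputable def phiB (β : ℝ) (j : ℤ) (x : ℝ) : ℝ := -β / (x + 2 * (j : ℝ))
noncomputable def cB (β : ℝ) (j : ℤ) (x : ℝ) : ℝ := β / (x + 2 * (j : ℝ)) ^ 2

lemma one_lt_abs_den {j : ℤ} (hj : j ≠ 0) {x : ℝ} (hx : x ∈ Ioo (-1 : ℝ) 1) :
    1 < |x + 2 * (j : ℝ)| := by
  have h1 : (1 : ℝ) ≤ |(j : ℝ)| := by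
    rw [← Int.cast_abs]
    exact_mod_cast Int.one_le_abs (by exact_mod_cast hj)
  have hx1 : |x| < 1 := abs_lt.2 ⟨hx.1, hx.2⟩
  have : |2 * (j : ℝ)| - |x| ≤ |x + 2 * (j : ℝ)| := by
    have h := abs_sub_abs_le_abs_sub (2 * (j : ℝ)) (-x)
    rw [sub_neg_eq_add, abs_neg] at h
    rw [show x + 2 * (j:ℝ) = 2 * (j:ℝ) + x by ring]
    linarith
  have h2 : (2 : ℝ) ≤ |2 * (j : ℝ)| := by
    rw [abs_mul]
    norm_num
    linarith
  linarith

lemma den_ne_zero {j : ℤ} (hj : j ≠ 0) {x : ℝ} (hx : x ∈ Ioo (-1 : ℝ) 1) :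
    x + 2 * (j : ℝ) ≠ 0 := by
  intro h
  have := one_lt_abs_den hj hx
  rw [h] at this; simp at this; linarith

lemma one_lt_sq_den {j : ℤ} (hj : j ≠ 0) {x : ℝ} (hx : x ∈ Ioo (-1 : ℝ) 1) :
    1 < (x + 2 * (j : ℝ)) ^ 2 := by
  have h := one_lt_abs_den hj hx
  calc (1:ℝ) = 1 * 1 := by ring
  _ < |x + 2 * (j : ℝ)| * |x + 2 * (j : ℝ)| :=
      mul_lt_mul h h.le one_pos (abs_nonneg _)
  _ = (x + 2 * (j : ℝ)) ^ 2 := by rw [← abs_mul, abs_mul_self]; ring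

lemma phiB_mem {β : ℝ} (hβ0 : 0 < β) {j : ℤ} (hj : j ≠ 0) {x : ℝ}
    (hx : x ∈ Ioo (-1 : ℝ) 1) : phiB β j x ∈ Ioo (-β) β := by
  have habs : |phiB β j x| < β := by
    rw [phiB, abs_div, abs_neg, abs_of_pos hβ0]
    exact div_lt_self hβ0 (one_lt_abs_den hj hx)
  exact ⟨(abs_lt.1 habs).1, (abs_lt.1 habs).2⟩

lemma phiB_mem_I {β : ℝ} (hβ0 : 0 < β) (hβ1 : β < 1) {j : ℤ} (hj : j ≠ 0) {x : ℝ}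
    (hx : x ∈ Ioo (-1 : ℝ) 1) : phiB β j x ∈ Ioo (-1 : ℝ) 1 := by
  have := phiB_mem hβ0 hj hx
  exact ⟨by linarith [this.1], by linarith [this.2]⟩

lemma cB_nonneg {β : ℝ} (hβ0 : 0 < β) (j : ℤ) (x : ℝ) : 0 ≤ cB β j x := by
  unfold cB; positivity

lemma cB_pos {β : ℝ} (hβ0 : 0 < β) {j : ℤ} (hj : j ≠ 0) {x : ℝ}
    (hx : x ∈ Ioo (-1 : ℝ) 1) : 0 < cB β j x := by
  unfold cB
  have := one_lt_sq_den hj hx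
  positivity

lemma Tsub_eq (β : ℝ) (f : ℝ → ℝ) (x : ℝ) :
    Tsub β f x = ∑' j : {j : ℤ // j ≠ 0}, cB β j.1 x * f (phiB β j.1 x) := rfl

open ENNReal in
noncomputable def Aop (β : ℝ) (u : ℝ → ℝ≥0∞) (x : ℝ) : ℝ≥0∞ :=
  ∑' j : {j : ℤ // j ≠ 0}, ENNReal.ofReal (cB β j.1 x) * u (phiB β j.1 x)

open ENNReal

lemma Aop_mono {β : ℝ} {u v : ℝ → ℝ≥0∞} (h : ∀ y, u y ≤ v y) (x : ℝ) :
    Aop β u x ≤ Aop β v x :=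
  ENNReal.tsum_le_tsum fun j => mul_le_mul_right (h _) _

lemma Aop_mono_on {β : ℝ} (hβ0 : 0 < β) (hβ1 : β < 1) {u v : ℝ → ℝ≥0∞}
    (h : ∀ y ∈ Ioo (-1 : ℝ) 1, u y ≤ v y) {x : ℝ} (hx : x ∈ Ioo (-1 : ℝ) 1) :
    Aop β u x ≤ Aop β v x :=
  ENNReal.tsum_le_tsum fun j =>
    mul_le_mul_right (h _ (phiB_mem_I hβ0 hβ1 j.2 hx)) _

lemma Aop_add {β : ℝ} (u v : ℝ → ℝ≥0∞) (x : ℝ) :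
    Aop β (fun y => u y + v y) x = Aop β u x + Aop β v x := by
  unfold Aop
  rw [← ENNReal.tsum_add]
  exact tsum_congr fun j => by rw [mul_add]

lemma Aop_smul {β : ℝ} (c : ℝ≥0∞) (u : ℝ → ℝ≥0∞) (x : ℝ) :
    Aop β (fun y => c * u y) x = c * Aop β u x := by
  unfold Aop
  rw [← ENNReal.tsum_mul_left]
  exact tsum_congr fun j => by ring

lemma Aop_measurable {β : ℝ} {u : ℝ → ℝ≥0∞} (hu : Measurable u) :
    Measurable (Aop β u) := by
  apply Measurable.ennreal_tsum
  intro j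
  apply Measurable.mul
  · exact ENNReal.measurable_ofReal.comp
      (measurable_const.div ((measurable_id.add_const _).pow_const 2))
  · exact hu.comp (measurable_const.div (measurable_id.add_const _))

lemma ofReal_abs_Tsub_le {β : ℝ} (hβ0 : 0 < β) (f : ℝ → ℝ) (x : ℝ) :
    ENNReal.ofReal |Tsub β f x| ≤ Aop β (fun y => ENNReal.ofReal |f y|) x := by
  rw [Tsub_eq]
  set a : {j : ℤ // j ≠ 0} → ℝ := fun j => cB β j.1 x * f (phiB β j.1 x) with ha
  by_cases hs : Summable a
  · have habs : Summable (fun j => |a j|) := hs.abs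
    have h1 : |∑' j, a j| ≤ ∑' j, |a j| := by
      have := norm_tsum_le_tsum_norm (f := a) (by simpa only [Real.norm_eq_abs] using habs)
      simpa only [Real.norm_eq_abs] using this
    refine le_trans (ENNReal.ofReal_le_ofReal h1) ?_
    rw [ENNReal.ofReal_tsum_of_nonneg (fun j => abs_nonneg _) habs]
    apply ENNReal.tsum_le_tsum
    intro j
    rw [ha]
    simp only []
    rw [abs_mul, abs_of_nonneg (cB_nonneg hβ0 _ _), ENNReal.ofReal_mul (cB_nonneg hβ0 _ _)]
  · rw [tsum_eq_zero_of_not_summable hs]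
    simp

noncomputable def Jset (β : ℝ) (j : ℤ) : Set ℝ :=
  Ioo (-β / (2 * (j : ℝ) - 1)) (-β / (2 * (j : ℝ) + 1))

lemma mem_Jset_iff {β : ℝ} (hβ0 : 0 < β) {j : ℤ} (hj : j ≠ 0) (y : ℝ) :
    y ∈ Jset β j ↔ y ≠ 0 ∧ (2 * (j : ℝ) - 1) < -β / y ∧ -β / y < 2 * (j : ℝ) + 1 := by
  have hβ : -β < 0 := by linarith
  rcases lt_or_gt_of_ne hj with hneg | hpos
  · have hj1 : (j : ℝ) ≤ -1 := by
      have : j ≤ -1 := by omega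
      exact_mod_cast this
    have hP : 2 * (j : ℝ) - 1 < 0 := by linarith
    have hQ : 2 * (j : ℝ) + 1 < 0 := by linarith
    constructor
    · rintro ⟨ha, hb⟩
      have h0 : 0 < -β / (2 * (j:ℝ) - 1) := div_pos_of_neg_of_neg hβ hP
      have hy : 0 < y := h0.trans ha
      rw [div_lt_iff_of_neg hP] at ha
      rw [lt_div_iff_of_neg hQ] at hb
      refine ⟨hy.ne', ?_, ?_⟩
      · rw [lt_div_iff₀ hy]; linarith
      · rw [div_lt_iff₀ hy]; linarith
    · rintro ⟨hy0, ha, hb⟩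
      have hy : 0 < y := by
        rcases lt_or_gt_of_ne hy0 with h | h
        · exfalso
          have : 0 < -β / y := div_pos_of_neg_of_neg hβ h
          linarith
        · exact h
      rw [lt_div_iff₀ hy] at ha
      rw [div_lt_iff₀ hy] at hb
      constructor
      · rw [div_lt_iff_of_neg hP]; linarith
      · rw [lt_div_iff_of_neg hQ]; linarith
  · have hj1 : (1:ℝ) ≤ (j : ℝ) := by exact_mod_cast hpos
    have hP : 0 < 2 * (j : ℝ) - 1 := by linarith
    have hQ : 0 < 2 * (j : ℝ) + 1 := by linarith
    constructor
    · rintro ⟨ha, hb⟩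
      have h0 : -β / (2 * (j:ℝ) + 1) < 0 := div_neg_of_neg_of_pos hβ hQ
      have hy : y < 0 := hb.trans h0
      rw [div_lt_iff₀ hP] at ha
      rw [lt_div_iff₀ hQ] at hb
      refine ⟨hy.ne, ?_, ?_⟩
      · rw [lt_div_iff_of_neg hy]; linarith
      · rw [div_lt_iff_of_neg hy]; linarith
    · rintro ⟨hy0, ha, hb⟩
      have hy : y < 0 := by
        rcases lt_or_gt_of_ne hy0 with h | h
        · exact h
        · exfalso
          have : -β / y < 0 := div_neg_of_neg_of_pos hβ h
          linarith
      rw [lt_div_iff_of_neg hy] at ha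
      rw [div_lt_iff_of_neg hy] at hb
      constructor
      · rw [div_lt_iff₀ hP]; linarith
      · rw [lt_div_iff₀ hQ]; linarith

lemma image_phiB {β : ℝ} (hβ0 : 0 < β) {j : ℤ} (hj : j ≠ 0) :
    phiB β j '' Ioo (-1 : ℝ) 1 = Jset β j := by
  ext y
  constructor
  · rintro ⟨x, hx, rfl⟩
    have hd := den_ne_zero hj hx
    rw [mem_Jset_iff hβ0 hj]
    have hphi : phiB β j x ≠ 0 := div_ne_zero (by linarith) hd
    have hkey : -β / phiB β j x = x + 2 * (j : ℝ) := by
      rw [phiB]; field_simp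
    exact ⟨hphi, by rw [hkey]; linarith [hx.1], by rw [hkey]; linarith [hx.2]⟩
  · intro hy
    rw [mem_Jset_iff hβ0 hj] at hy
    obtain ⟨hy0, ha, hb⟩ := hy
    refine ⟨-β / y - 2 * (j : ℝ), ⟨by linarith, by linarith⟩, ?_⟩
    rw [phiB]
    have : -β / y - 2 * (j:ℝ) + 2 * (j:ℝ) = -β / y := by ring
    rw [this]
    field_simp

lemma Jset_subset {β : ℝ} (hβ0 : 0 < β) {j : ℤ} (hj : j ≠ 0) :
    Jset β j ⊆ Ioo (-β) β := by
  rw [← image_phiB hβ0 hj]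
  rintro y ⟨x, hx, rfl⟩
  exact phiB_mem hβ0 hj hx

lemma Jset_disjoint {β : ℝ} (hβ0 : 0 < β) :
    Pairwise (Function.onFun Disjoint fun j : {j : ℤ // j ≠ 0} => Jset β j.1) := by
  intro i j hij
  rw [Function.onFun, Set.disjoint_left]
  rintro y hyi hyj
  rw [mem_Jset_iff hβ0 i.2] at hyi
  rw [mem_Jset_iff hβ0 j.2] at hyj
  obtain ⟨hy0, ha, hb⟩ := hyi
  obtain ⟨-, ha', hb'⟩ := hyj
  have h1 : ((i:ℤ):ℝ) - ((j:ℤ):ℝ) < 1 ∧ -1 < ((i:ℤ):ℝ) - ((j:ℤ):ℝ) :=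
    ⟨by linarith, by linarith⟩
  have h2 : ((i:ℤ):ℝ) = ((j:ℤ):ℝ) := by
    have hi1 : ((i:ℤ) - (j:ℤ) : ℝ) < 1 := by push_cast; linarith [h1.1]
    have hi2 : (-1 : ℝ) < ((i:ℤ) - (j:ℤ) : ℝ) := by push_cast; linarith [h1.2]
    have g1 : (i:ℤ) - (j:ℤ) < 1 := by exact_mod_cast hi1
    have g2 : (-1 : ℤ) < (i:ℤ) - (j:ℤ) := by exact_mod_cast hi2
    have : (i:ℤ) = (j:ℤ) := by omega
    exact_mod_cast this
  exact hij (Subtype.ext (by exact_mod_cast h2))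

lemma phiB_hasDerivAt {β : ℝ} {j : ℤ} {x : ℝ} (hd : x + 2 * (j : ℝ) ≠ 0) :
    HasDerivAt (phiB β j) (cB β j x) x := by
  have h1 : HasDerivAt (fun x : ℝ => x + 2 * (j : ℝ)) 1 x := (hasDerivAt_id x).add_const _
  have h2 := h1.inv hd
  have h3 := h2.const_mul (-β)
  have : -β * (-1 / (x + 2 * (j:ℝ)) ^ 2) = cB β j x := by
    rw [cB]; field_simp
  rw [this] at h3
  have hfun : (fun y => -β * (fun x : ℝ => x + 2 * (j:ℝ))⁻¹ y) = phiB β j := by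
    funext t
    rw [phiB, div_eq_mul_inv]
    rfl
  rwa [hfun] at h3

lemma phiB_injOn {β : ℝ} (hβ0 : 0 < β) {j : ℤ} (hj : j ≠ 0) :
    InjOn (phiB β j) (Ioo (-1 : ℝ) 1) := by
  intro x hx x' hx' h
  have hd := den_ne_zero hj hx
  have hd' := den_ne_zero hj hx'
  rw [phiB, phiB, div_eq_div_iff hd hd'] at h
  have hβ : β ≠ 0 := hβ0.ne'
  have := mul_left_cancel₀ (neg_ne_zero.2 hβ) h
  linarith

lemma lintegral_image_1d {s : Set ℝ} {f f' : ℝ → ℝ} (hs : MeasurableSet s)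
    (hf' : ∀ x ∈ s, HasDerivWithinAt f (f' x) s x) (hf : InjOn f s) (g : ℝ → ℝ≥0∞) :
    ∫⁻ x in f '' s, g x = ∫⁻ x in s, ENNReal.ofReal |f' x| * g (f x) := by
  simpa only [ContinuousLinearMap.det_toSpanSingleton] using
    MeasureTheory.lintegral_image_eq_lintegral_abs_det_fderiv_mul volume hs
      (fun x hx => (hf' x hx).hasFDerivWithinAt) hf g

lemma CoV_branch {β : ℝ} (hβ0 : 0 < β) {j : ℤ} (hj : j ≠ 0) (z : ℝ → ℝ≥0∞) :
    ∫⁻ x in Ioo (-1 : ℝ) 1, ENNReal.ofReal (cB β j x) * z (phiB β j x) =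
      ∫⁻ y in Jset β j, z y := by
  rw [← image_phiB hβ0 hj,
    lintegral_image_1d measurableSet_Ioo
      (fun x hx => (phiB_hasDerivAt (den_ne_zero hj hx)).hasDerivWithinAt)
      (phiB_injOn hβ0 hj) z]
  refine setLIntegral_congr_fun measurableSet_Ioo (fun x hx => ?_)
  rw [abs_of_nonneg (cB_nonneg hβ0 _ _)]

lemma CoV {β : ℝ} (hβ0 : 0 < β) {z : ℝ → ℝ≥0∞} (hz : Measurable z) :
    ∫⁻ x in Ioo (-1 : ℝ) 1, Aop β z x ≤ ∫⁻ y in Ioo (-β) β, z y := by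
  have hmeas : ∀ j : {j : ℤ // j ≠ 0},
      Measurable fun x => ENNReal.ofReal (cB β j.1 x) * z (phiB β j.1 x) := by
    intro j
    apply Measurable.mul
    · exact ENNReal.measurable_ofReal.comp
        (measurable_const.div ((measurable_id.add_const _).pow_const 2))
    · exact hz.comp (measurable_const.div (measurable_id.add_const _))
  calc ∫⁻ x in Ioo (-1 : ℝ) 1, Aop β z x
      = ∑' j : {j : ℤ // j ≠ 0},
          ∫⁻ x in Ioo (-1 : ℝ) 1, ENNReal.ofReal (cB β j.1 x) * z (phiB β j.1 x) :=
        lintegral_tsum fun j => (hmeas j).aemeasurable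
    _ = ∑' j : {j : ℤ // j ≠ 0}, ∫⁻ y in Jset β j.1, z y :=
        tsum_congr fun j => CoV_branch hβ0 j.2 z
    _ = ∫⁻ y in ⋃ j : {j : ℤ // j ≠ 0}, Jset β j.1, z y :=
        (lintegral_iUnion (fun j => measurableSet_Ioo) (Jset_disjoint hβ0) z).symm
    _ ≤ ∫⁻ y in Ioo (-β) β, z y :=
        lintegral_mono_set (Set.iUnion_subset fun j => Jset_subset hβ0 j.2)

lemma icc_filter_succ (N : ℕ) :
    (Finset.Icc (-(N:ℤ) - 1) ((N:ℤ) + 1)).filter (· ≠ 0) =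
      insert ((N:ℤ) + 1) (insert (-(N:ℤ) - 1)
        ((Finset.Icc (-(N:ℤ)) (N:ℤ)).filter (· ≠ 0))) := by
  ext j
  simp only [Finset.mem_filter, Finset.mem_Icc, Finset.mem_insert]
  constructor
  · rintro ⟨⟨h1, h2⟩, h3⟩
    by_cases hA : j = (N:ℤ) + 1
    · exact Or.inl hA
    · by_cases hB : j = -(N:ℤ) - 1
      · exact Or.inr (Or.inl hB)
      · exact Or.inr (Or.inr ⟨⟨by omega, by omega⟩, h3⟩)
  · rintro (rfl | rfl | ⟨⟨h1, h2⟩, h3⟩)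
    · exact ⟨⟨by omega, by omega⟩, by omega⟩
    · exact ⟨⟨by omega, by omega⟩, by omega⟩
    · exact ⟨⟨by omega, by omega⟩, h3⟩

lemma telescoping_sum {x : ℝ} (hx : x ∈ Ioo (-1 : ℝ) 1) (N : ℕ) :
    ∑ j ∈ (Finset.Icc (-(N:ℤ)) (N:ℤ)).filter (· ≠ 0),
        (1 : ℝ) / ((x + 2 * (j : ℝ)) ^ 2 - 1) =
      ((1/2) * (1/(x+1)) - (1/2) * (1/(x + 2*(N:ℝ) + 1))) +
      ((1/2) * (1/(1-x)) - (1/2) * (1/(2*(N:ℝ) + 1 - x))) := by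
  obtain ⟨hx1, hx2⟩ := hx
  induction N with
  | zero =>
    simp only [Nat.cast_zero, neg_zero, Finset.Icc_self]
    rw [show (Finset.filter (· ≠ 0) {(0:ℤ)}) = ∅ by rfl]
    simp
  | succ N ih =>
    have key : (Finset.Icc (-(N:ℤ) - 1) ((N:ℤ) + 1)).filter (· ≠ 0) =
        insert ((N:ℤ) + 1) (insert (-(N:ℤ) - 1)
          ((Finset.Icc (-(N:ℤ)) (N:ℤ)).filter (· ≠ 0))) := icc_filter_succ N
    have h1 : ((N:ℤ) + 1) ∉ insert (-(N:ℤ) - 1)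
        ((Finset.Icc (-(N:ℤ)) (N:ℤ)).filter (· ≠ 0)) := by
      simp only [Finset.mem_insert, Finset.mem_filter, Finset.mem_Icc]
      push_neg
      constructor
      · omega
      · intro h
        omega
    have h2 : (-(N:ℤ) - 1) ∉ (Finset.Icc (-(N:ℤ)) (N:ℤ)).filter (· ≠ 0) := by
      simp only [Finset.mem_filter, Finset.mem_Icc]
      push_neg
      intro h
      omega
    have e1 : (-(N:ℤ) - 1 : ℤ) = -((N:ℕ)+1 : ℕ) := by push_cast; ring
    have e2 : ((N:ℤ) + 1 : ℤ) = ((N:ℕ)+1 : ℕ) := by push_cast; ring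
    rw [show (-((N+1:ℕ)):ℤ) = -(N:ℤ) - 1 by push_cast; ring,
        show (((N+1:ℕ)):ℤ) = (N:ℤ) + 1 by push_cast; ring,
        key, Finset.sum_insert h1, Finset.sum_insert h2, ih]
    have d1 : x + 2*(N:ℝ) + 1 > 0 := by linarith [Nat.cast_nonneg (α := ℝ) N]
    have d2 : x + 2*(N:ℝ) + 3 > 0 := by linarith [Nat.cast_nonneg (α := ℝ) N]
    have d3 : 2*(N:ℝ) + 1 - x > 0 := by linarith [Nat.cast_nonneg (α := ℝ) N]
    have d4 : 2*(N:ℝ) + 3 - x > 0 := by linarith [Nat.cast_nonneg (α := ℝ) N]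
    have hnew1 : (1 : ℝ) / ((x + 2 * (((N:ℤ) + 1 : ℤ) : ℝ)) ^ 2 - 1) =
        (1/2) * (1/(x + 2*(N:ℝ) + 1)) - (1/2) * (1/(x + 2*(N:ℝ) + 3)) := by
      push_cast
      rw [show (x + 2*((N:ℝ)+1))^2 - 1 = (x + 2*(N:ℝ) + 1) * (x + 2*(N:ℝ) + 3) by ring]
      field_simp
      ring
    have hnew2 : (1 : ℝ) / ((x + 2 * ((-(N:ℤ) - 1 : ℤ) : ℝ)) ^ 2 - 1) =
        (1/2) * (1/(2*(N:ℝ) + 1 - x)) - (1/2) * (1/(2*(N:ℝ) + 3 - x)) := by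
      push_cast
      rw [show (x + 2*(-(N:ℝ)-1))^2 - 1 = (2*(N:ℝ) + 1 - x) * (2*(N:ℝ) + 3 - x) by ring]
      field_simp
      ring
    rw [hnew1, hnew2]
    push_cast
    ring

lemma sum_s_le {x : ℝ} (hx : x ∈ Ioo (-1 : ℝ) 1) (F : Finset {j : ℤ // j ≠ 0}) :
    ∑ j ∈ F, (1 : ℝ) / ((x + 2 * ((j : ℤ) : ℝ)) ^ 2 - 1) ≤ 1 / (1 - x ^ 2) := by
  obtain ⟨hx1, hx2⟩ := hx
  set N : ℕ := F.sup (fun j => (j : ℤ).natAbs) with hN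
  have hsub : F.image (Subtype.val) ⊆ (Finset.Icc (-(N:ℤ)) (N:ℤ)).filter (· ≠ 0) := by
    intro j hj
    simp only [Finset.mem_image] at hj
    obtain ⟨j', hj', rfl⟩ := hj
    simp only [Finset.mem_filter, Finset.mem_Icc]
    have hle : (j' : ℤ).natAbs ≤ N := Finset.le_sup (f := fun j : {j : ℤ // j ≠ 0} => (j : ℤ).natAbs) hj'
    exact ⟨⟨by omega, by omega⟩, j'.2⟩
  have h1 : ∑ j ∈ F, (1 : ℝ) / ((x + 2 * ((j : ℤ) : ℝ)) ^ 2 - 1) =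
      ∑ j ∈ F.image Subtype.val, (1 : ℝ) / ((x + 2 * (j : ℝ)) ^ 2 - 1) := by
    rw [Finset.sum_image (fun a _ b _ h => Subtype.ext h)]
  have h2 : ∑ j ∈ F.image Subtype.val, (1 : ℝ) / ((x + 2 * (j : ℝ)) ^ 2 - 1) ≤
      ∑ j ∈ (Finset.Icc (-(N:ℤ)) (N:ℤ)).filter (· ≠ 0),
        (1 : ℝ) / ((x + 2 * (j : ℝ)) ^ 2 - 1) := by
    apply Finset.sum_le_sum_of_subset_of_nonneg hsub
    intro j hj _
    have hj0 : j ≠ 0 := (Finset.mem_filter.1 hj).2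
    have h := one_lt_sq_den hj0 ⟨hx1, hx2⟩
    have : (0:ℝ) < (x + 2 * (j:ℝ)) ^ 2 - 1 := by linarith
    positivity
  rw [h1]
  refine h2.trans ?_
  rw [telescoping_sum ⟨hx1, hx2⟩ N]
  have d1 : x + 2*(N:ℝ) + 1 > 0 := by linarith [Nat.cast_nonneg (α := ℝ) N]
  have d3 : 2*(N:ℝ) + 1 - x > 0 := by linarith [Nat.cast_nonneg (α := ℝ) N]
  have hv : (0:ℝ) ≤ (1/2) * (1/(x + 2*(N:ℝ) + 1)) := by positivity
  have hw : (0:ℝ) ≤ (1/2) * (1/(2*(N:ℝ) + 1 - x)) := by positivity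
  have heq : (1/2) * (1/(x+1)) + (1/2) * (1/(1-x)) = 1 / (1 - x^2) := by
    have hp1 : x + 1 > 0 := by linarith
    have hp2 : 1 - x > 0 := by linarith
    have hp3 : 1 - x^2 > 0 := by nlinarith
    field_simp
    ring
  linarith

noncomputable def Psi : ℝ → ENNReal := fun t => ENNReal.ofReal (1 / (1 - t ^ 2))

lemma Aop_psi {β : ℝ} (hβ0 : 0 < β) (hβ1 : β < 1) {x : ℝ} (hx : x ∈ Ioo (-1 : ℝ) 1) :
    Aop β Psi x ≤ ENNReal.ofReal β * Psi x := by
  have hterm : ∀ j : {j : ℤ // j ≠ 0},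
      ENNReal.ofReal (cB β j.1 x) * Psi (phiB β j.1 x) ≤
        ENNReal.ofReal β * ENNReal.ofReal ((1:ℝ) / ((x + 2 * ((j : ℤ) : ℝ)) ^ 2 - 1)) := by
    intro j
    set d : ℝ := x + 2 * ((j : ℤ) : ℝ) with hd
    have hd2 : 1 < d ^ 2 := one_lt_sq_den j.2 hx
    have hdne : d ≠ 0 := den_ne_zero j.2 hx
    have hβ2 : β ^ 2 < 1 := by nlinarith
    have hpos : 0 < d ^ 2 - β ^ 2 := by nlinarith
    rw [Psi, ← ENNReal.ofReal_mul (cB_nonneg hβ0 _ _), ← ENNReal.ofReal_mul hβ0.le]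
    apply ENNReal.ofReal_le_ofReal
    have he : cB β j.1 x * (1 / (1 - phiB β j.1 x ^ 2)) = β / (d ^ 2 - β ^ 2) := by
      rw [cB, phiB, ← hd]
      rw [div_pow, neg_sq]
      rw [show 1 - β ^ 2 / d ^ 2 = (d ^ 2 - β ^ 2) / d ^ 2 by field_simp]
      field_simp
    rw [he, show β * ((1:ℝ) / (d ^ 2 - 1)) = β / (d ^ 2 - 1) by ring]
    exact div_le_div_of_nonneg_left hβ0.le (by linarith) (by nlinarith)
  calc Aop β Psi x
      ≤ ∑' j : {j : ℤ // j ≠ 0},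
          ENNReal.ofReal β * ENNReal.ofReal ((1:ℝ) / ((x + 2 * ((j : ℤ) : ℝ)) ^ 2 - 1)) :=
        ENNReal.tsum_le_tsum hterm
    _ = ENNReal.ofReal β * ∑' j : {j : ℤ // j ≠ 0},
          ENNReal.ofReal ((1:ℝ) / ((x + 2 * ((j : ℤ) : ℝ)) ^ 2 - 1)) :=
        ENNReal.tsum_mul_left
    _ ≤ ENNReal.ofReal β * Psi x := by
        apply mul_le_mul_right
        rw [ENNReal.tsum_eq_iSup_sum]
        apply iSup_le
        intro F
        rw [← ENNReal.ofReal_sum_of_nonneg]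
        · exact ENNReal.ofReal_le_ofReal (sum_s_le hx F)
        · intro j _
          have h := one_lt_sq_den j.2 hx
          have : (0:ℝ) < (x + 2 * ((j:ℤ):ℝ)) ^ 2 - 1 := by linarith
          positivity

lemma Tsub_congr {β : ℝ} (hβ0 : 0 < β) (hβ1 : β < 1) {f g : ℝ → ℝ}
    (h : f =ᵐ[volume.restrict (Ioo (-β) β)] g) :
    Tsub β f =ᵐ[volume.restrict (Ioo (-1 : ℝ) 1)] Tsub β g := by
  have h0 : volume ({y | f y ≠ g y} ∩ Ioo (-β) β) = 0 := by
    have := MeasureTheory.ae_iff.1 h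
    rwa [Measure.restrict_apply' measurableSet_Ioo] at this
  obtain ⟨N, hNsub, hNmeas, hNnull⟩ := exists_measurable_superset_of_null h0
  have hj_ae : ∀ j : {j : ℤ // j ≠ 0},
      ∀ᵐ x ∂(volume.restrict (Ioo (-1 : ℝ) 1)), phiB β j.1 x ∉ N := by
    intro j
    have hz : Measurable (N.indicator (fun _ => (1 : ENNReal))) :=
      measurable_const.indicator hNmeas
    have hint : ∫⁻ x in Ioo (-1 : ℝ) 1,
        ENNReal.ofReal (cB β j.1 x) * (N.indicator (fun _ => (1:ENNReal)) (phiB β j.1 x)) = 0 := by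
      rw [CoV_branch hβ0 j.2]
      refine le_antisymm ?_ (zero_le)
      calc ∫⁻ y in Jset β j.1, N.indicator (fun _ => (1:ENNReal)) y
          ≤ ∫⁻ y, N.indicator (fun _ => (1:ENNReal)) y := setLIntegral_le_lintegral _ _
        _ = volume N := by rw [lintegral_indicator (f := fun _ => (1:ENNReal)) hNmeas]; simp
        _ = 0 := hNnull
    have hmeas : Measurable fun x =>
        ENNReal.ofReal (cB β j.1 x) * (N.indicator (fun _ => (1:ENNReal)) (phiB β j.1 x)) := by
      apply Measurable.mul
      · exact ENNReal.measurable_ofReal.comp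
          (measurable_const.div ((measurable_id.add_const _).pow_const 2))
      · exact (measurable_const.indicator hNmeas).comp
          (measurable_const.div (measurable_id.add_const _))
    have := (lintegral_eq_zero_iff hmeas).1 hint
    filter_upwards [this, ae_restrict_mem measurableSet_Ioo] with x hx hxI
    intro hmem
    have hc : ENNReal.ofReal (cB β j.1 x) ≠ 0 := by
      simp only [ne_eq, ENNReal.ofReal_eq_zero, not_le]
      exact cB_pos hβ0 j.2 hxI
    rw [Set.indicator_of_mem hmem] at hx
    simp only [Pi.zero_apply, mul_one] at hx
    exact hc hx
  have hall : ∀ᵐ x ∂(volume.restrict (Ioo (-1 : ℝ) 1)),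
      ∀ j : {j : ℤ // j ≠ 0}, phiB β j.1 x ∉ N := ae_all_iff.2 hj_ae
  filter_upwards [hall, ae_restrict_mem measurableSet_Ioo] with x hx hxI
  rw [Tsub_eq, Tsub_eq]
  apply tsum_congr
  intro j
  congr 1
  by_contra hne
  exact hx j (hNsub ⟨hne, phiB_mem hβ0 j.2 hxI⟩)

lemma Tsub_measurable {β : ℝ} (hβ0 : 0 < β) {g : ℝ → ℝ} (hg : Measurable g) :
    Measurable (Tsub β g) := by
  classical
  set a : {j : ℤ // j ≠ 0} → ℝ → ℝ := fun j x => cB β j.1 x * g (phiB β j.1 x) with ha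
  have hameas : ∀ j, Measurable (a j) := by
    intro j
    apply Measurable.mul
    · exact measurable_const.div ((measurable_id.add_const _).pow_const 2)
    · exact hg.comp (measurable_const.div (measurable_id.add_const _))
  set P : ℝ → ENNReal := fun x => ∑' j, ENNReal.ofReal (a j x) with hP
  set Q : ℝ → ENNReal := fun x => ∑' j, ENNReal.ofReal (-(a j x)) with hQ
  have hPmeas : Measurable P :=
    Measurable.ennreal_tsum fun j => ENNReal.measurable_ofReal.comp (hameas j)
  have hQmeas : Measurable Q :=
    Measurable.ennreal_tsum fun j => ENNReal.measurable_ofReal.comp ((hameas j).neg)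
  have key : ∀ x, Tsub β g x =
      if P x = ⊤ ∨ Q x = ⊤ then 0 else (P x).toReal - (Q x).toReal := by
    intro x
    have hsplit : ∀ j, a j x = (ENNReal.ofReal (a j x)).toReal -
        (ENNReal.ofReal (-(a j x))).toReal := by
      intro j
      rcases le_total 0 (a j x) with h | h
      · rw [ENNReal.toReal_ofReal h, ENNReal.ofReal_of_nonpos (by linarith)]
        simp
      · rw [ENNReal.ofReal_of_nonpos h, ENNReal.toReal_ofReal (by linarith)]
        simp
    by_cases hs : Summable fun j => a j x
    · rw [Tsub_eq]
      have hP' : P x ≠ ⊤ := by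
        rw [hP]
        simp only []
        have : ∀ j, ENNReal.ofReal (a j x) ≤ ENNReal.ofReal |a j x| :=
          fun j => ENNReal.ofReal_le_ofReal (le_abs_self _)
        refine ne_top_of_le_ne_top ?_ (ENNReal.tsum_le_tsum this)
        rw [← ENNReal.ofReal_tsum_of_nonneg (fun j => abs_nonneg _) hs.abs]
        exact ENNReal.ofReal_ne_top
      have hQ' : Q x ≠ ⊤ := by
        rw [hQ]
        simp only []
        have : ∀ j, ENNReal.ofReal (-(a j x)) ≤ ENNReal.ofReal |a j x| :=
          fun j => ENNReal.ofReal_le_ofReal (neg_le_abs _)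
        refine ne_top_of_le_ne_top ?_ (ENNReal.tsum_le_tsum this)
        rw [← ENNReal.ofReal_tsum_of_nonneg (fun j => abs_nonneg _) hs.abs]
        exact ENNReal.ofReal_ne_top
      rw [if_neg (by push_neg; exact ⟨hP', hQ'⟩)]
      have hsp : Summable fun j => (ENNReal.ofReal (a j x)).toReal :=
        ENNReal.summable_toReal hP'
      have hsq : Summable fun j => (ENNReal.ofReal (-(a j x))).toReal :=
        ENNReal.summable_toReal hQ'
      have e1 : (P x).toReal = ∑' j, (ENNReal.ofReal (a j x)).toReal := by
        rw [hP]
        exact ENNReal.tsum_toReal_eq fun j => ENNReal.ofReal_ne_top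
      have e2 : (Q x).toReal = ∑' j, (ENNReal.ofReal (-(a j x))).toReal := by
        rw [hQ]
        exact ENNReal.tsum_toReal_eq fun j => ENNReal.ofReal_ne_top
      rw [e1, e2, ← Summable.tsum_sub hsp hsq]
      exact tsum_congr fun j => hsplit j
    · rw [Tsub_eq, tsum_eq_zero_of_not_summable hs]
      rw [if_pos]
      by_contra hcon
      push_neg at hcon
      obtain ⟨hP', hQ'⟩ := hcon
      have hsp : Summable fun j => (ENNReal.ofReal (a j x)).toReal :=
        ENNReal.summable_toReal hP'
      have hsq : Summable fun j => (ENNReal.ofReal (-(a j x))).toReal :=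
        ENNReal.summable_toReal hQ'
      exact hs (by
        have := hsp.sub hsq
        apply this.congr
        intro j
        exact (hsplit j).symm)
  have : Tsub β g = fun x =>
      if P x = ⊤ ∨ Q x = ⊤ then 0 else (P x).toReal - (Q x).toReal := funext key
  rw [this]
  have hset : MeasurableSet {x | P x = ⊤ ∨ Q x = ⊤} := by
    have h1 : MeasurableSet {x | P x = ⊤} := hPmeas (measurableSet_singleton ⊤)
    have h2 : MeasurableSet {x | Q x = ⊤} := hQmeas (measurableSet_singleton ⊤)
    exact h1.union h2
  exact Measurable.ite hset measurable_const
    ((hPmeas.ennreal_toReal).sub (hQmeas.ennreal_toReal))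

lemma Ioo_beta_subset {β : ℝ} (hβ0 : 0 < β) (hβ1 : β < 1) :
    Ioo (-β) β ⊆ Ioo (-1 : ℝ) 1 :=
  fun y hy => ⟨by linarith [hy.1], by linarith [hy.2]⟩

lemma Tsub_contract {β : ℝ} (hβ0 : 0 < β) (hβ1 : β < 1) {f : ℝ → ℝ}
    (hf : IntegrableOn f (Ioo (-1 : ℝ) 1)) :
    IntegrableOn (Tsub β f) (Ioo (-1 : ℝ) 1) ∧
      (∫ x in Ioo (-1 : ℝ) 1, |Tsub β f x|) ≤ ∫ x in Ioo (-1 : ℝ) 1, |f x| := by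
  set g : ℝ → ℝ := hf.1.mk f with hgdef
  have hgsm : StronglyMeasurable g := hf.1.stronglyMeasurable_mk
  have hfg : f =ᵐ[volume.restrict (Ioo (-1 : ℝ) 1)] g := hf.1.ae_eq_mk
  have hgmeas : Measurable g := hgsm.measurable
  have hgi : IntegrableOn g (Ioo (-1 : ℝ) 1) := hf.congr hfg
  set u : ℝ → ENNReal := fun y => ENNReal.ofReal |g y| with hu
  have humeas : Measurable u := ENNReal.measurable_ofReal.comp hgmeas.abs
  have hufin : ∫⁻ y in Ioo (-1 : ℝ) 1, u y < ⊤ := by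
    have := hgi.2
    rw [MeasureTheory.hasFiniteIntegral_iff_norm] at this
    simpa [Real.norm_eq_abs] using this
  have hlin : ∫⁻ x in Ioo (-1 : ℝ) 1, ENNReal.ofReal |Tsub β g x| ≤
      ∫⁻ y in Ioo (-1 : ℝ) 1, u y := by
    calc ∫⁻ x in Ioo (-1 : ℝ) 1, ENNReal.ofReal |Tsub β g x|
        ≤ ∫⁻ x in Ioo (-1 : ℝ) 1, Aop β u x :=
          lintegral_mono fun x => ofReal_abs_Tsub_le hβ0 g x
      _ ≤ ∫⁻ y in Ioo (-β) β, u y := CoV hβ0 humeas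
      _ ≤ ∫⁻ y in Ioo (-1 : ℝ) 1, u y := lintegral_mono_set (Ioo_beta_subset hβ0 hβ1)
  have hTgmeas : Measurable (Tsub β g) := Tsub_measurable hβ0 hgmeas
  have hTgint : IntegrableOn (Tsub β g) (Ioo (-1 : ℝ) 1) := by
    constructor
    · exact hTgmeas.aestronglyMeasurable
    · rw [MeasureTheory.hasFiniteIntegral_iff_norm]
      simp only [Real.norm_eq_abs]
      exact lt_of_le_of_lt hlin hufin
  have hTfg : Tsub β f =ᵐ[volume.restrict (Ioo (-1 : ℝ) 1)] Tsub β g :=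
    Tsub_congr hβ0 hβ1 (ae_restrict_of_ae_restrict_of_subset (Ioo_beta_subset hβ0 hβ1) hfg)
  refine ⟨hTgint.congr hTfg.symm, ?_⟩
  have e1 : (∫ x in Ioo (-1 : ℝ) 1, |Tsub β f x|) = ∫ x in Ioo (-1 : ℝ) 1, |Tsub β g x| :=
    integral_congr_ae (hTfg.fun_comp abs)
  have e2 : (∫ x in Ioo (-1 : ℝ) 1, |Tsub β g x|) =
      (∫⁻ x in Ioo (-1 : ℝ) 1, ENNReal.ofReal |Tsub β g x|).toReal := by
    rw [integral_eq_lintegral_of_nonneg_ae (Filter.Eventually.of_forall fun x => abs_nonneg _)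
      hTgmeas.abs.aestronglyMeasurable]
  have e3 : (∫ x in Ioo (-1 : ℝ) 1, |g x|) = (∫⁻ y in Ioo (-1 : ℝ) 1, u y).toReal := by
    rw [integral_eq_lintegral_of_nonneg_ae (Filter.Eventually.of_forall fun x => abs_nonneg _)
      hgmeas.abs.aestronglyMeasurable]
  have e4 : (∫ x in Ioo (-1 : ℝ) 1, |f x|) = ∫ x in Ioo (-1 : ℝ) 1, |g x| :=
    integral_congr_ae (hfg.fun_comp abs)
  rw [e1, e2, e4, e3]
  exact ENNReal.toReal_mono hufin.ne hlin

lemma Aop_iter_meas {β : ℝ} {u : ℝ → ENNReal} (hu : Measurable u) (n : ℕ) :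
    Measurable ((Aop β)^[n] u) := by
  induction n with
  | zero => exact hu
  | succ n ih => rw [Function.iterate_succ_apply']; exact Aop_measurable ih

lemma Aop_iter_add {β : ℝ} (v w : ℝ → ENNReal) (n : ℕ) :
    (Aop β)^[n] (fun y => v y + w y) =
      fun x => (Aop β)^[n] v x + (Aop β)^[n] w x := by
  induction n with
  | zero => rfl
  | succ n ih =>
    rw [Function.iterate_succ_apply', Function.iterate_succ_apply',
      Function.iterate_succ_apply', ih]
    funext x
    exact Aop_add _ _ x

lemma Aop_iter_mono {β : ℝ} {u v : ℝ → ENNReal} (h : ∀ y, u y ≤ v y) (n : ℕ) (x : ℝ) :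
    (Aop β)^[n] u x ≤ (Aop β)^[n] v x := by
  induction n generalizing x with
  | zero => exact h x
  | succ n ih =>
    rw [Function.iterate_succ_apply', Function.iterate_succ_apply']
    exact Aop_mono (fun y => ih y) x

lemma ofReal_abs_iter_le {β : ℝ} (hβ0 : 0 < β) (g : ℝ → ℝ) (n : ℕ) (x : ℝ) :
    ENNReal.ofReal |(Tsub β)^[n] g x| ≤
      (Aop β)^[n] (fun y => ENNReal.ofReal |g y|) x := by
  induction n generalizing x with
  | zero => exact le_refl _
  | succ n ih =>
    rw [Function.iterate_succ_apply', Function.iterate_succ_apply']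
    calc ENNReal.ofReal |Tsub β ((Tsub β)^[n] g) x|
        ≤ Aop β (fun y => ENNReal.ofReal |(Tsub β)^[n] g y|) x :=
          ofReal_abs_Tsub_le hβ0 _ x
      _ ≤ Aop β ((Aop β)^[n] fun y => ENNReal.ofReal |g y|) x :=
          Aop_mono (fun y => ih y) x

lemma Aop_iter_psi_bound {β : ℝ} (hβ0 : 0 < β) (hβ1 : β < 1) {v : ℝ → ENNReal}
    (m : ENNReal) (hv : ∀ y ∈ Ioo (-1 : ℝ) 1, v y ≤ m * Psi y) (n : ℕ) :
    ∀ x ∈ Ioo (-1 : ℝ) 1, (Aop β)^[n] v x ≤ m * (ENNReal.ofReal β) ^ n * Psi x := by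
  induction n with
  | zero => intro x hx; simpa using hv x hx
  | succ n ih =>
    intro x hx
    rw [Function.iterate_succ_apply']
    calc Aop β ((Aop β)^[n] v) x
        ≤ Aop β (fun y => m * (ENNReal.ofReal β) ^ n * Psi y) x :=
          Aop_mono_on hβ0 hβ1 (fun y hy => ih y hy) hx
      _ = m * (ENNReal.ofReal β) ^ n * Aop β Psi x := Aop_smul _ _ x
      _ ≤ m * (ENNReal.ofReal β) ^ n * (ENNReal.ofReal β * Psi x) :=
          mul_le_mul_right (Aop_psi hβ0 hβ1 hx) _
      _ = m * (ENNReal.ofReal β) ^ (n + 1) * Psi x := by ring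

lemma tail_contract {β : ℝ} (hβ0 : 0 < β) (hβ1 : β < 1) {w : ℝ → ENNReal}
    (hw : Measurable w) (n : ℕ) :
    ∫⁻ x in Ioo (-1 : ℝ) 1, (Aop β)^[n] w x ≤ ∫⁻ x in Ioo (-1 : ℝ) 1, w x := by
  induction n with
  | zero => exact le_refl _
  | succ n ih =>
    rw [Function.iterate_succ_apply']
    calc ∫⁻ x in Ioo (-1 : ℝ) 1, Aop β ((Aop β)^[n] w) x
        ≤ ∫⁻ y in Ioo (-β) β, (Aop β)^[n] w y := CoV hβ0 (Aop_iter_meas hw n)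
      _ ≤ ∫⁻ y in Ioo (-1 : ℝ) 1, (Aop β)^[n] w y :=
          lintegral_mono_set (Ioo_beta_subset hβ0 hβ1)
      _ ≤ ∫⁻ x in Ioo (-1 : ℝ) 1, w x := ih


/-- For `0 < β < 1`, the subtransfer operator `T_β` maps `L¹(I₁)` contractively into itself,
and the `L¹(I₁)`-norms of the iterates `T_β^N f` tend to `0`. -/
theorem subtransfer_contracts_and_iterates_tend_to_zero
    (β : ℝ) (hβ0 : 0 < β) (hβ1 : β < 1) (f : ℝ → ℝ)
    (hf : IntegrableOn f (Ioo (-1) 1)) :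
    IntegrableOn (Tsub β f) (Ioo (-1) 1) ∧
    (∫ x in Ioo (-1 : ℝ) 1, |Tsub β f x|) ≤ (∫ x in Ioo (-1 : ℝ) 1, |f x|) ∧
    Tendsto (fun N : ℕ => ∫ x in Ioo (-1 : ℝ) 1, |(Tsub β)^[N] f x|) atTop (nhds 0) := by
  classical
  obtain ⟨hint, hcontr⟩ := Tsub_contract hβ0 hβ1 hf
  refine ⟨hint, hcontr, ?_⟩
  -- measurable representative
  set g : ℝ → ℝ := hf.1.mk f with hgdef
  have hgsm : StronglyMeasurable g := hf.1.stronglyMeasurable_mk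
  have hfg : f =ᵐ[volume.restrict (Ioo (-1 : ℝ) 1)] g := hf.1.ae_eq_mk
  have hgmeas : Measurable g := hgsm.measurable
  have hgi : IntegrableOn g (Ioo (-1 : ℝ) 1) := hf.congr hfg
  set u : ℝ → ENNReal := fun y => ENNReal.ofReal |g y| with hu
  have humeas : Measurable u := ENNReal.measurable_ofReal.comp hgmeas.abs
  have hufin : ∫⁻ y in Ioo (-1 : ℝ) 1, u y < ⊤ := by
    have := hgi.2
    rw [MeasureTheory.hasFiniteIntegral_iff_norm] at this
    simpa [Real.norm_eq_abs] using this
  -- iterate congruence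
  have hcong : ∀ N : ℕ,
      (Tsub β)^[N] f =ᵐ[volume.restrict (Ioo (-1 : ℝ) 1)] (Tsub β)^[N] g := by
    intro N
    induction N with
    | zero => simpa using hfg
    | succ n ih =>
      rw [Function.iterate_succ_apply', Function.iterate_succ_apply']
      exact Tsub_congr hβ0 hβ1
        (ae_restrict_of_ae_restrict_of_subset (Ioo_beta_subset hβ0 hβ1) ih)
  have hgiter_meas : ∀ N : ℕ, Measurable ((Tsub β)^[N] g) := by
    intro N
    induction N with
    | zero => exact hgmeas
    | succ n ih =>
      rw [Function.iterate_succ_apply']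
      exact Tsub_measurable hβ0 ih
  -- the constant
  set Cβ : ENNReal := ENNReal.ofReal (1 / (1 - β ^ 2)) * volume (Ioo (-β) β) with hCβ
  have hCβfin : Cβ ≠ ⊤ := by
    rw [hCβ]
    exact ENNReal.mul_ne_top ENNReal.ofReal_ne_top (measure_Ioo_lt_top).ne
  rw [Metric.tendsto_atTop]
  intro ε hε
  -- tail splitting
  set w : ℕ → ℝ → ENNReal := fun m y => if (m : ENNReal) < u y then u y else 0 with hw
  set v : ℕ → ℝ → ENNReal := fun m y => if (m : ENNReal) < u y then 0 else u y with hv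
  have hwmeas : ∀ m, Measurable (w m) := by
    intro m
    exact Measurable.ite (humeas measurableSet_Ioi) humeas measurable_const
  have hvmeas : ∀ m, Measurable (v m) := by
    intro m
    exact Measurable.ite (humeas measurableSet_Ioi) measurable_const humeas
  have hwle : ∀ m y, w m y ≤ u y := by
    intro m y
    rw [hw]
    dsimp only
    split <;> simp
  have hsplitu : ∀ m, u = fun y => v m y + w m y := by
    intro m
    funext y
    rw [hv, hw]
    dsimp only
    split <;> simp
  have hvle : ∀ m y, v m y ≤ (m : ENNReal) := by
    intro m y
    rw [hv]
    dsimp only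
    split
    · exact zero_le
    · exact le_of_not_gt (by assumption)
  -- tail tends to 0
  have htail : Tendsto (fun m => ∫⁻ y in Ioo (-1 : ℝ) 1, w m y) atTop (nhds 0) := by
    have hlim : ∀ᵐ y ∂(volume.restrict (Ioo (-1 : ℝ) 1)),
        Tendsto (fun m => w m y) atTop (nhds 0) := by
      filter_upwards [ae_lt_top humeas hufin.ne] with y hy
      obtain ⟨m₀, hm₀⟩ := ENNReal.exists_nat_gt hy.ne
      apply tendsto_atTop_of_eventually_const (i₀ := m₀)
      intro m hm
      rw [hw]
      dsimp only
      rw [if_neg]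
      push_neg
      exact le_trans hm₀.le (by exact_mod_cast Nat.cast_le.2 hm)
    have := tendsto_lintegral_of_dominated_convergence (μ := volume.restrict (Ioo (-1 : ℝ) 1))
      u hwmeas (fun m => Filter.Eventually.of_forall (hwle m)) hufin.ne
      (by filter_upwards [hlim] with y hy; simpa using hy)
    simpa [lintegral_zero] using this
  obtain ⟨m, hm⟩ : ∃ m : ℕ, ∫⁻ y in Ioo (-1 : ℝ) 1, w m y < ENNReal.ofReal (ε / 2) := by
    have hpos : (0 : ENNReal) < ENNReal.ofReal (ε / 2) := ENNReal.ofReal_pos.2 (by linarith)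
    exact (htail.eventually_lt_const hpos).exists
  -- bounded part bound
  have hv_psi : ∀ y ∈ Ioo (-1 : ℝ) 1, v m y ≤ (m : ENNReal) * Psi y := by
    intro y hy
    have h1 : (1 : ENNReal) ≤ Psi y := by
      rw [Psi, show (1 : ENNReal) = ENNReal.ofReal 1 by simp]
      apply ENNReal.ofReal_le_ofReal
      have hy2 : y ^ 2 < 1 := by nlinarith [hy.1, hy.2]
      rw [le_div_iff₀ (by linarith)]
      nlinarith [sq_nonneg y]
    calc v m y ≤ (m : ENNReal) := hvle m y
      _ = (m : ENNReal) * 1 := (mul_one _).symm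
      _ ≤ (m : ENNReal) * Psi y := mul_le_mul_right h1 _
  have hPsimeas : Measurable Psi := by
    apply ENNReal.measurable_ofReal.comp
    exact measurable_const.div ((measurable_const.sub (measurable_id.pow_const 2)))
  -- per-N lintegral bound
  have hInt_bound : ∀ n : ℕ, ∫⁻ x in Ioo (-1 : ℝ) 1, (Aop β)^[n + 1] u x ≤
      (m : ENNReal) * (ENNReal.ofReal β) ^ n * Cβ + ENNReal.ofReal (ε / 2) := by
    intro n
    have hv_bound : ∫⁻ x in Ioo (-1 : ℝ) 1, (Aop β)^[n + 1] (v m) x ≤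
        (m : ENNReal) * (ENNReal.ofReal β) ^ n * Cβ := by
      rw [Function.iterate_succ_apply']
      calc ∫⁻ x in Ioo (-1 : ℝ) 1, Aop β ((Aop β)^[n] (v m)) x
          ≤ ∫⁻ y in Ioo (-β) β, (Aop β)^[n] (v m) y := CoV hβ0 (Aop_iter_meas (hvmeas m) n)
        _ ≤ ∫⁻ y in Ioo (-β) β, (m : ENNReal) * (ENNReal.ofReal β) ^ n * Psi y := by
            apply setLIntegral_mono (by fun_prop)
            intro y hy
            exact Aop_iter_psi_bound hβ0 hβ1 (m : ENNReal) hv_psi n y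
              (Ioo_beta_subset hβ0 hβ1 hy)
        _ = (m : ENNReal) * (ENNReal.ofReal β) ^ n * ∫⁻ y in Ioo (-β) β, Psi y := by
            rw [lintegral_const_mul _ hPsimeas]
        _ ≤ (m : ENNReal) * (ENNReal.ofReal β) ^ n * Cβ := by
            apply mul_le_mul_right
            calc ∫⁻ y in Ioo (-β) β, Psi y
                ≤ ∫⁻ _ in Ioo (-β) β, ENNReal.ofReal (1 / (1 - β ^ 2)) := by
                  apply setLIntegral_mono measurable_const
                  intro y hy
                  rw [Psi]
                  apply ENNReal.ofReal_le_ofReal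
                  have hy2 : y ^ 2 < β ^ 2 := sq_lt_sq' hy.1 hy.2
                  have hβ2 : β ^ 2 < 1 := by nlinarith
                  apply one_div_le_one_div_of_le (by linarith)
                  linarith
              _ = Cβ := by rw [setLIntegral_const, hCβ]
    have hw_bound : ∫⁻ x in Ioo (-1 : ℝ) 1, (Aop β)^[n + 1] (w m) x ≤
        ENNReal.ofReal (ε / 2) :=
      le_trans (tail_contract hβ0 hβ1 (hwmeas m) (n + 1)) hm.le
    calc ∫⁻ x in Ioo (-1 : ℝ) 1, (Aop β)^[n + 1] u x
        = ∫⁻ x in Ioo (-1 : ℝ) 1,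
            ((Aop β)^[n + 1] (v m) x + (Aop β)^[n + 1] (w m) x) := by
          rw [hsplitu m, Aop_iter_add]
      _ = (∫⁻ x in Ioo (-1 : ℝ) 1, (Aop β)^[n + 1] (v m) x) +
            ∫⁻ x in Ioo (-1 : ℝ) 1, (Aop β)^[n + 1] (w m) x :=
          lintegral_add_left (Aop_iter_meas (hvmeas m) (n + 1)) _
      _ ≤ (m : ENNReal) * (ENNReal.ofReal β) ^ n * Cβ + ENNReal.ofReal (ε / 2) :=
          add_le_add hv_bound hw_bound
  -- real-integral bound
  have hmain : ∀ n : ℕ, ∫ x in Ioo (-1 : ℝ) 1, |(Tsub β)^[n + 1] f x| ≤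
      ((m : ENNReal) * (ENNReal.ofReal β) ^ n * Cβ).toReal + ε / 2 := by
    intro n
    have hfin1 : (m : ENNReal) * (ENNReal.ofReal β) ^ n * Cβ ≠ ⊤ :=
      ENNReal.mul_ne_top (ENNReal.mul_ne_top (ENNReal.natCast_ne_top m)
        (ENNReal.pow_ne_top ENNReal.ofReal_ne_top)) hCβfin
    have e1 : ∫ x in Ioo (-1 : ℝ) 1, |(Tsub β)^[n + 1] f x| =
        ∫ x in Ioo (-1 : ℝ) 1, |(Tsub β)^[n + 1] g x| :=
      integral_congr_ae ((hcong (n + 1)).fun_comp abs)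
    have e2 : ∫ x in Ioo (-1 : ℝ) 1, |(Tsub β)^[n + 1] g x| =
        (∫⁻ x in Ioo (-1 : ℝ) 1, ENNReal.ofReal |(Tsub β)^[n + 1] g x|).toReal := by
      rw [integral_eq_lintegral_of_nonneg_ae
        (Filter.Eventually.of_forall fun x => abs_nonneg _)
        (hgiter_meas (n + 1)).abs.aestronglyMeasurable]
    have e3 : ∫⁻ x in Ioo (-1 : ℝ) 1, ENNReal.ofReal |(Tsub β)^[n + 1] g x| ≤
        (m : ENNReal) * (ENNReal.ofReal β) ^ n * Cβ + ENNReal.ofReal (ε / 2) :=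
      le_trans (lintegral_mono fun x => ofReal_abs_iter_le hβ0 g (n + 1) x) (hInt_bound n)
    rw [e1, e2]
    calc (∫⁻ x in Ioo (-1 : ℝ) 1, ENNReal.ofReal |(Tsub β)^[n + 1] g x|).toReal
        ≤ ((m : ENNReal) * (ENNReal.ofReal β) ^ n * Cβ + ENNReal.ofReal (ε / 2)).toReal :=
          ENNReal.toReal_mono (by
            exact ENNReal.add_ne_top.2 ⟨hfin1, ENNReal.ofReal_ne_top⟩) e3
      _ = ((m : ENNReal) * (ENNReal.ofReal β) ^ n * Cβ).toReal + ε / 2 := by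
          rw [ENNReal.toReal_add hfin1 ENNReal.ofReal_ne_top,
            ENNReal.toReal_ofReal (by linarith)]
  -- geometric decay
  have hpow : Tendsto (fun n : ℕ => ((m : ENNReal) * (ENNReal.ofReal β) ^ n * Cβ).toReal)
      atTop (nhds 0) := by
    have h1 : Tendsto (fun n : ℕ => (ENNReal.ofReal β) ^ n) atTop (nhds 0) :=
      ENNReal.tendsto_pow_atTop_nhds_zero_of_lt_one (ENNReal.ofReal_lt_one.2 hβ1)
    have h2 : Tendsto (fun n : ℕ => ((m : ENNReal) * Cβ) * (ENNReal.ofReal β) ^ n)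
        atTop (nhds 0) := by
      have := ENNReal.Tendsto.const_mul h1
        (Or.inr (ENNReal.mul_ne_top (ENNReal.natCast_ne_top m) hCβfin))
      simpa using this
    have h3 : (fun n : ℕ => ((m : ENNReal) * (ENNReal.ofReal β) ^ n * Cβ).toReal) =
        fun n : ℕ => (((m : ENNReal) * Cβ) * (ENNReal.ofReal β) ^ n).toReal := by
      funext n
      congr 1
      ring
    rw [h3]
    have h4 := (ENNReal.tendsto_toReal (a := 0) (by simp)).comp h2
    rw [show (0:ℝ≥0∞).toReal = 0 by simp] at h4
    exact h4
  obtain ⟨n₀, hn₀⟩ := eventually_atTop.1 (hpow.eventually_lt_const (show (0:ℝ) < ε / 2 by linarith))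
  refine ⟨n₀ + 1, fun N hN => ?_⟩
  obtain ⟨n, rfl⟩ : ∃ n, N = n + 1 := ⟨N - 1, by omega⟩
  have hn : n₀ ≤ n := by omega
  rw [Real.dist_eq, sub_zero,
    abs_of_nonneg (integral_nonneg fun x => abs_nonneg _)]
  calc ∫ x in Ioo (-1 : ℝ) 1, |(Tsub β)^[n + 1] f x|
      ≤ ((m : ENNReal) * (ENNReal.ofReal β) ^ n * Cβ).toReal + ε / 2 := hmain n
    _ < ε / 2 + ε / 2 := by linarith [hn₀ n hn]
    _ = ε := by ring
end

section
/- Fix 0 < β ≤ 1 and let κ_α(x) := α/(α²−x²). Then: (a) for every x ∈ (−1,1) the series ∑_{j∈ℤ, j≠0} (β/(x+2j)²)·κ_β(−β/(x+2j)) converges absolutely and equals κ₁(x) = 1/(1−x²), i.e. T_β κ_β = κ₁ on (−1,1); (b) for every n ≥ 1 and every x ∈ (−1,1), 0 ≤ (T_β^n κ₁)(x) ≤ β^n·κ₁(x) = β^n/(1−x²); (c) if moreover 0 < β < 1, then (T_β^n κ₁)(x) ≤ 2β^n/(1−β) for all x ∈ (−1,1) and n ≥ 1. -/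
open MeasureTheory Set Filter

/-- `κ_α(x) = α/(α² - x²)`. -/
noncomputable def kap (α x : ℝ) : ℝ := α / (α ^ 2 - x ^ 2)

namespace SubtransferAux

open Topology

/-- auxiliary sequences -/
noncomputable def Aa (x : ℝ) (j : ℤ) : ℝ := 1 / ((x + 2 * (j : ℝ)) ^ 2 - 1)

noncomputable def Bb (β x : ℝ) (j : ℤ) : ℝ := β / ((x + 2 * (j : ℝ)) ^ 2 - β ^ 2)

/-- Telescoping sums. -/
lemma hasSum_telescope {g : ℕ → ℝ} (hmono : ∀ n, g (n + 1) ≤ g n)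
    (hlim : Tendsto g atTop (𝓝 0)) :
    HasSum (fun n => g n - g (n + 1)) (g 0) := by
  have hnn : ∀ n, 0 ≤ g n - g (n + 1) := fun n => sub_nonneg.2 (hmono n)
  rw [hasSum_iff_tendsto_nat_of_nonneg hnn]
  have : (fun n : ℕ => ∑ i ∈ Finset.range n, (g i - g (i + 1))) = fun n => g 0 - g n := by
    funext n; exact Finset.sum_range_sub' g n
  rw [this]
  simpa using tendsto_const_nhds.sub hlim

lemma hasSum_tele (c : ℝ) (hc : 0 < c) :
    HasSum (fun n : ℕ => 1 / ((c + 2 * n) * (c + 2 * n + 2))) (1 / (2 * c)) := by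
  have hpos : ∀ n : ℕ, 0 < c + 2 * (n : ℝ) := fun n => by positivity
  have hmono : ∀ n : ℕ, (fun n : ℕ => 1 / (2 * (c + 2 * (n : ℝ)))) (n + 1)
      ≤ (fun n : ℕ => 1 / (2 * (c + 2 * (n : ℝ)))) n := by
    intro n
    have h1 := hpos n
    have h2 := hpos (n + 1)
    apply div_le_div_of_nonneg_left (by norm_num) (by positivity)
    push_cast
    linarith
  have hlim : Tendsto (fun n : ℕ => 1 / (2 * (c + 2 * (n : ℝ)))) atTop (𝓝 0) := by
    have h1 : Tendsto (fun n : ℕ => 2 * (c + 2 * (n : ℝ))) atTop atTop := by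
      apply tendsto_atTop_mono (fun n : ℕ => ?_) tendsto_natCast_atTop_atTop
      have : (0:ℝ) ≤ (n:ℝ) := Nat.cast_nonneg n
      nlinarith
    have h2 := h1.inv_tendsto_atTop
    have he : (fun n : ℕ => 1 / (2 * (c + 2 * (n : ℝ)))) = (fun n : ℕ => 2 * (c + 2 * (n : ℝ)))⁻¹ := by
      funext n; simp [one_div]
    rw [he]; exact h2
  have key := hasSum_telescope hmono hlim
  have h0 : (fun n : ℕ => (fun n : ℕ => 1 / (2 * (c + 2 * (n : ℝ)))) n
      - (fun n : ℕ => 1 / (2 * (c + 2 * (n : ℝ)))) (n + 1))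
      = fun n : ℕ => 1 / ((c + 2 * n) * (c + 2 * n + 2)) := by
    funext n
    have h1 := hpos n
    have h2 := hpos (n + 1)
    push_cast at h2 ⊢
    rw [div_sub_div _ _ (by positivity) (by positivity),
      div_eq_div_iff (by positivity) (by nlinarith)]
    ring
  rw [h0] at key
  simpa using key

/-- Splitting a sum over nonzero integers into positive and negative parts. -/
lemma hasSum_nonzero {t : ℤ → ℝ} {a b : ℝ}
    (hp : HasSum (fun n : ℕ => t ((n : ℤ) + 1)) a)
    (hn : HasSum (fun n : ℕ => t (-((n : ℤ) + 1))) b) :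
    HasSum (fun j : {j : ℤ // j ≠ 0} => t j) (a + b) := by
  classical
  set F : ℤ → ℝ := fun j => if j = 0 then 0 else t j with hF
  have hp' : HasSum (fun n : ℕ => F ((n : ℤ) + 1)) a := by
    have he : (fun n : ℕ => F ((n : ℤ) + 1)) = fun n : ℕ => t ((n : ℤ) + 1) := by
      funext n; simp only [hF]; rw [if_neg (by omega)]
    rw [he]; exact hp
  have hn' : HasSum (fun n : ℕ => F (-((n : ℤ) + 1))) b := by
    have he : (fun n : ℕ => F (-((n : ℤ) + 1))) = fun n : ℕ => t (-((n : ℤ) + 1)) := by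
      funext n; simp only [hF]; rw [if_neg (by omega)]
    rw [he]; exact hn
  have hsum : HasSum F (a + F 0 + b) := hp'.of_add_one_of_neg_add_one hn'
  have h0 : F 0 = 0 := by simp [hF]
  rw [h0, add_zero] at hsum
  have h2 : HasSum (fun j : {j : ℤ // j ≠ 0} => F j) (a + b) := by
    refine (Function.Injective.hasSum_iff Subtype.coe_injective ?_).2 hsum
    intro j hj
    have hj0 : j = 0 := by
      by_contra h
      exact hj ⟨⟨j, h⟩, rfl⟩
    simp [hF, hj0]
  have he : (fun j : {j : ℤ // j ≠ 0} => F j) = fun j : {j : ℤ // j ≠ 0} => t j := by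
    funext j; simp only [hF]; rw [if_neg j.2]
  rwa [he] at h2

variable {β x : ℝ}

lemma q_sq_gt (hx : x ∈ Ioo (-1:ℝ) 1) {j : ℤ} (hj : j ≠ 0) :
    1 < (x + 2 * (j : ℝ)) ^ 2 := by
  obtain ⟨hx1, hx2⟩ := hx
  have h1 : (1:ℝ) ≤ |(j:ℝ)| := by exact_mod_cast Int.one_le_abs (by omega)
  have hxabs : |x| < 1 := abs_lt.mpr ⟨hx1, hx2⟩
  have key : |2 * (j : ℝ)| ≤ |x + 2 * (j : ℝ)| + |x| := by
    calc |2 * (j : ℝ)| = |(x + 2 * (j : ℝ)) + (-x)| := by congr 1; ring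
    _ ≤ |x + 2 * (j : ℝ)| + |(-x)| := abs_add_le _ _
    _ = |x + 2 * (j : ℝ)| + |x| := by rw [abs_neg]
  have h2 : (2:ℝ) ≤ |2 * (j : ℝ)| := by
    rw [abs_mul]
    norm_num
    linarith
  have h3 : 1 < |x + 2 * (j : ℝ)| := by linarith
  nlinarith [sq_abs (x + 2 * (j : ℝ)), abs_nonneg (x + 2 * (j : ℝ))]

lemma alg1' (β q : ℝ) (hβ : 0 < β) (hq : 1 < q ^ 2) :
    β / q ^ 2 * kap β (-β / q) = 1 / (q ^ 2 - 1) := by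
  have hq0 : q ≠ 0 := by intro h; rw [h] at hq; norm_num at hq
  have h1 : (0:ℝ) < q ^ 2 - 1 := by linarith
  have hd : β ^ 2 - (-β / q) ^ 2 = β ^ 2 * (q ^ 2 - 1) / q ^ 2 := by
    field_simp
  rw [kap, hd]
  rw [div_div_eq_mul_div, div_mul_div_comm]
  rw [div_eq_div_iff (by positivity) (by positivity)]
  ring

lemma alg2' (β q : ℝ) (hβ : 0 < β) (hq : 1 < q ^ 2) (hβ1 : β ≤ 1) :
    β / q ^ 2 * (1 / (1 - (-β / q) ^ 2)) = β / (q ^ 2 - β ^ 2) := by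
  have hq0 : q ≠ 0 := by intro h; rw [h] at hq; norm_num at hq
  have h2 : (0:ℝ) < q ^ 2 - β ^ 2 := by nlinarith
  have hd : 1 - (-β / q) ^ 2 = (q ^ 2 - β ^ 2) / q ^ 2 := by
    field_simp
  rw [hd, one_div_div, div_mul_div_comm]
  rw [div_eq_div_iff (by positivity) (by positivity)]
  ring

lemma alg1 (hβ : 0 < β) {j : ℤ} (hq : 1 < (x + 2 * (j : ℝ)) ^ 2) :
    β / (x + 2 * (j : ℝ)) ^ 2 * kap β (-β / (x + 2 * (j : ℝ))) = Aa x j :=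
  alg1' β _ hβ hq

lemma alg2 (hβ : 0 < β) (hβ1 : β ≤ 1) {j : ℤ} (hq : 1 < (x + 2 * (j : ℝ)) ^ 2) :
    β / (x + 2 * (j : ℝ)) ^ 2 * (1 / (1 - (-β / (x + 2 * (j : ℝ))) ^ 2)) = Bb β x j :=
  alg2' β _ hβ hq hβ1

lemma A_nonneg {j : ℤ} (hq : 1 < (x + 2 * (j : ℝ)) ^ 2) : 0 ≤ Aa x j :=
  le_of_lt (one_div_pos.2 (by linarith))

lemma B_nonneg (hβ : 0 < β) (hβ1 : β ≤ 1) {j : ℤ} (hq : 1 < (x + 2 * (j : ℝ)) ^ 2) :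
    0 ≤ Bb β x j :=
  le_of_lt (div_pos hβ (by nlinarith))

lemma B_le_A (hβ : 0 < β) (hβ1 : β ≤ 1) {j : ℤ} (hq : 1 < (x + 2 * (j : ℝ)) ^ 2) :
    Bb β x j ≤ β * Aa x j := by
  rw [Bb, Aa, mul_one_div]
  apply div_le_div_of_nonneg_left (le_of_lt hβ) (by linarith)
  nlinarith

/-- positive-side telescoping for `Aa`. -/
lemma hasSum_A_pos (hx : x ∈ Ioo (-1:ℝ) 1) :
    HasSum (fun n : ℕ => Aa x ((n : ℤ) + 1)) (1 / (2 * (1 + x))) := by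
  obtain ⟨hx1, hx2⟩ := hx
  have h := hasSum_tele (1 + x) (by linarith)
  have he : (fun n : ℕ => 1 / ((1 + x + 2 * n) * (1 + x + 2 * n + 2)))
      = fun n : ℕ => Aa x ((n : ℤ) + 1) := by
    funext n
    rw [Aa]
    congr 1
    push_cast
    ring
  rw [he] at h
  simpa using h

lemma hasSum_A_neg (hx : x ∈ Ioo (-1:ℝ) 1) :
    HasSum (fun n : ℕ => Aa x (-((n : ℤ) + 1))) (1 / (2 * (1 - x))) := by
  obtain ⟨hx1, hx2⟩ := hx
  have h := hasSum_tele (1 - x) (by linarith)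
  have he : (fun n : ℕ => 1 / ((1 - x + 2 * n) * (1 - x + 2 * n + 2)))
      = fun n : ℕ => Aa x (-((n : ℤ) + 1)) := by
    funext n
    rw [Aa]
    congr 1
    push_cast
    ring
  rw [he] at h
  simpa using h

lemma hasSum_A (hx : x ∈ Ioo (-1:ℝ) 1) :
    HasSum (fun j : {j : ℤ // j ≠ 0} => Aa x (j : ℤ)) (1 / (1 - x ^ 2)) := by
  obtain h := hasSum_nonzero (hasSum_A_pos hx) (hasSum_A_neg hx)
  have hv : 1 / (2 * (1 + x)) + 1 / (2 * (1 - x)) = 1 / (1 - x ^ 2) := by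
    obtain ⟨hx1, hx2⟩ := hx
    rw [div_add_div _ _ (by nlinarith) (by nlinarith), div_eq_div_iff (by nlinarith) (by nlinarith)]
    ring
  rwa [hv] at h

lemma summable_B_pos (hβ : 0 < β) (hβ1 : β ≤ 1) (hx : x ∈ Ioo (-1:ℝ) 1) :
    Summable (fun n : ℕ => Bb β x ((n : ℤ) + 1)) := by
  apply Summable.of_nonneg_of_le
    (fun n => B_nonneg hβ hβ1 (q_sq_gt hx (by omega)))
    (fun n => B_le_A hβ hβ1 (q_sq_gt hx (by omega)))
  exact (hasSum_A_pos hx).summable.mul_left β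

lemma summable_B_neg (hβ : 0 < β) (hβ1 : β ≤ 1) (hx : x ∈ Ioo (-1:ℝ) 1) :
    Summable (fun n : ℕ => Bb β x (-((n : ℤ) + 1))) := by
  apply Summable.of_nonneg_of_le
    (fun n => B_nonneg hβ hβ1 (q_sq_gt hx (by omega)))
    (fun n => B_le_A hβ hβ1 (q_sq_gt hx (by omega)))
  exact (hasSum_A_neg hx).summable.mul_left β

lemma hasSum_B (hβ : 0 < β) (hβ1 : β ≤ 1) (hx : x ∈ Ioo (-1:ℝ) 1) :
    HasSum (fun j : {j : ℤ // j ≠ 0} => Bb β x (j : ℤ))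
      ((∑' n : ℕ, Bb β x ((n : ℤ) + 1)) + ∑' n : ℕ, Bb β x (-((n : ℤ) + 1))) :=
  hasSum_nonzero (summable_B_pos hβ hβ1 hx).hasSum (summable_B_neg hβ hβ1 hx).hasSum

lemma tsum_B_le (hβ : 0 < β) (hβ1 : β ≤ 1) (hx : x ∈ Ioo (-1:ℝ) 1) :
    ∑' j : {j : ℤ // j ≠ 0}, Bb β x (j : ℤ) ≤ β / (1 - x ^ 2) := by
  have h1 : ∑' j : {j : ℤ // j ≠ 0}, Bb β x (j : ℤ)
      ≤ ∑' j : {j : ℤ // j ≠ 0}, β * Aa x (j : ℤ) := by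
    apply Summable.tsum_le_tsum
      (fun j => B_le_A hβ hβ1 (q_sq_gt hx j.2))
      (hasSum_B hβ hβ1 hx).summable
      ((hasSum_A hx).summable.mul_left β)
  have h2 : ∑' j : {j : ℤ // j ≠ 0}, β * Aa x (j : ℤ) = β * (1 / (1 - x ^ 2)) :=
    ((hasSum_A hx).mul_left β).tsum_eq
  rw [h2, mul_one_div] at h1
  exact h1


lemma tsum_B_tail_pos (hβ : 0 < β) (hβ1 : β < 1) (hx : x ∈ Ioo (-1:ℝ) 1) :
    ∑' n : ℕ, Bb β x ((n : ℤ) + 2) ≤ β / 4 := by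
  obtain ⟨hx1, hx2⟩ := hx
  have hsum2 := hasSum_tele 2 (by norm_num)
  have hle : ∀ n : ℕ, Bb β x ((n : ℤ) + 2) ≤ β * (1 / ((2 + 2 * n) * (2 + 2 * n + 2))) := by
    intro n
    rw [Bb, mul_one_div]
    have hn : (0:ℝ) ≤ (n:ℝ) := Nat.cast_nonneg n
    have hd : (0:ℝ) < (2 + 2 * n) * (2 + 2 * n + 2) := by positivity
    apply div_le_div_of_nonneg_left hβ.le hd
    push_cast
    nlinarith
  have hsummL : Summable (fun n : ℕ => Bb β x ((n : ℤ) + 2)) := by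
    have h := (summable_nat_add_iff 1).2 (summable_B_pos hβ hβ1.le ⟨hx1, hx2⟩)
    have he : (fun n : ℕ => Bb β x (((n + 1 : ℕ) : ℤ) + 1)) = fun n : ℕ => Bb β x ((n : ℤ) + 2) := by
      funext n
      have hc : ((n + 1 : ℕ) : ℤ) + 1 = (n : ℤ) + 2 := by push_cast; ring
      rw [hc]
    rwa [he] at h
  calc ∑' n : ℕ, Bb β x ((n : ℤ) + 2)
      ≤ ∑' n : ℕ, β * (1 / ((2 + 2 * (n:ℝ)) * (2 + 2 * n + 2))) :=
        Summable.tsum_le_tsum hle hsummL (hsum2.summable.mul_left β)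
    _ = β * (1 / (2 * 2)) := (hsum2.mul_left β).tsum_eq
    _ = β / 4 := by ring

lemma tsum_B_tail_neg (hβ : 0 < β) (hβ1 : β < 1) (hx : x ∈ Ioo (-1:ℝ) 1) :
    ∑' n : ℕ, Bb β x (-((n : ℤ) + 2)) ≤ β / 4 := by
  obtain ⟨hx1, hx2⟩ := hx
  have hsum2 := hasSum_tele 2 (by norm_num)
  have hle : ∀ n : ℕ, Bb β x (-((n : ℤ) + 2)) ≤ β * (1 / ((2 + 2 * n) * (2 + 2 * n + 2))) := by
    intro n
    rw [Bb, mul_one_div]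
    have hn : (0:ℝ) ≤ (n:ℝ) := Nat.cast_nonneg n
    have hd : (0:ℝ) < (2 + 2 * n) * (2 + 2 * n + 2) := by positivity
    apply div_le_div_of_nonneg_left hβ.le hd
    push_cast
    nlinarith
  have hsummL : Summable (fun n : ℕ => Bb β x (-((n : ℤ) + 2))) := by
    have h := (summable_nat_add_iff 1).2 (summable_B_neg hβ hβ1.le ⟨hx1, hx2⟩)
    have he : (fun n : ℕ => Bb β x (-(((n + 1 : ℕ) : ℤ) + 1))) = fun n : ℕ => Bb β x (-((n : ℤ) + 2)) := by
      funext n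
      have hc : ((n + 1 : ℕ) : ℤ) + 1 = (n : ℤ) + 2 := by push_cast; ring
      rw [hc]
    rwa [he] at h
  calc ∑' n : ℕ, Bb β x (-((n : ℤ) + 2))
      ≤ ∑' n : ℕ, β * (1 / ((2 + 2 * (n:ℝ)) * (2 + 2 * n + 2))) :=
        Summable.tsum_le_tsum hle hsummL (hsum2.summable.mul_left β)
    _ = β * (1 / (2 * 2)) := (hsum2.mul_left β).tsum_eq
    _ = β / 4 := by ring

lemma tsum_B_le2 (hβ : 0 < β) (hβ1 : β < 1) (hx : x ∈ Ioo (-1:ℝ) 1) :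
    ∑' j : {j : ℤ // j ≠ 0}, Bb β x (j : ℤ) ≤ 2 * β / (1 - β) := by
  obtain ⟨hx1, hx2⟩ := hx
  have hx' : x ∈ Ioo (-1:ℝ) 1 := ⟨hx1, hx2⟩
  have h1β : (0:ℝ) < 1 - β ^ 2 := by nlinarith
  have h4β : (0:ℝ) < 4 - β ^ 2 := by nlinarith
  -- split positive side
  have hp := Summable.tsum_eq_zero_add (summable_B_pos hβ hβ1.le hx')
  have hep : (fun n : ℕ => Bb β x (((n + 1 : ℕ) : ℤ) + 1)) = fun n : ℕ => Bb β x ((n : ℤ) + 2) := by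
    funext n
    have hc : ((n + 1 : ℕ) : ℤ) + 1 = (n : ℤ) + 2 := by push_cast; ring
    rw [hc]
  rw [hep] at hp
  have hn := Summable.tsum_eq_zero_add (summable_B_neg hβ hβ1.le hx')
  have hen : (fun n : ℕ => Bb β x (-(((n + 1 : ℕ) : ℤ) + 1)))
      = fun n : ℕ => Bb β x (-((n : ℤ) + 2)) := by
    funext n
    have hc : ((n + 1 : ℕ) : ℤ) + 1 = (n : ℤ) + 2 := by push_cast; ring
    rw [hc]
  rw [hen] at hn
  have htsum := (hasSum_B hβ hβ1.le hx').tsum_eq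
  rw [htsum, hp, hn]
  -- bound the two lead terms
  have hB1 : Bb β x (((0:ℕ) : ℤ) + 1) = β / ((x + 2) ^ 2 - β ^ 2) := by
    rw [Bb]; norm_num
  have hBm1 : Bb β x (-(((0:ℕ) : ℤ) + 1)) = β / ((x - 2) ^ 2 - β ^ 2) := by
    rw [Bb]; push_cast; ring_nf
  have hlead : Bb β x (((0:ℕ) : ℤ) + 1) + Bb β x (-(((0:ℕ) : ℤ) + 1))
      ≤ β / (1 - β ^ 2) + β / (4 - β ^ 2) := by
    rw [hB1, hBm1]
    rcases le_total 0 x with hx0 | hx0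
    · have e1 : β / ((x + 2) ^ 2 - β ^ 2) ≤ β / (4 - β ^ 2) :=
        div_le_div_of_nonneg_left hβ.le (by nlinarith) (by nlinarith)
      have e2 : β / ((x - 2) ^ 2 - β ^ 2) ≤ β / (1 - β ^ 2) :=
        div_le_div_of_nonneg_left hβ.le (by nlinarith) (by nlinarith)
      linarith
    · have e1 : β / ((x + 2) ^ 2 - β ^ 2) ≤ β / (1 - β ^ 2) :=
        div_le_div_of_nonneg_left hβ.le (by nlinarith) (by nlinarith)
      have e2 : β / ((x - 2) ^ 2 - β ^ 2) ≤ β / (4 - β ^ 2) :=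
        div_le_div_of_nonneg_left hβ.le (by nlinarith) (by nlinarith)
      linarith
  have htail1 := tsum_B_tail_pos hβ hβ1 hx'
  have htail2 := tsum_B_tail_neg hβ hβ1 hx'
  -- final numeric inequality
  have h43 : β / (4 - β ^ 2) ≤ β / 3 :=
    div_le_div_of_nonneg_left hβ.le (by norm_num) (by nlinarith)
  have hfin : β / (1 - β ^ 2) + β / 3 + β / 4 + β / 4 ≤ 2 * β / (1 - β) := by
    have h1m : (0:ℝ) < 1 - β := by linarith
    have h1p : (0:ℝ) < 1 + β := by linarith
    have e : β / (1 - β ^ 2) + β * (1 + 2 * β) / (1 - β ^ 2) = 2 * β / (1 - β) := by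
      rw [← add_div, div_eq_div_iff (ne_of_gt h1β) (ne_of_gt h1m)]
      ring
    have h5 : β / 3 + β / 4 + β / 4 ≤ β * (1 + 2 * β) / (1 - β ^ 2) := by
      have hb : β ≤ β * (1 + 2 * β) / (1 - β ^ 2) := by
        rw [le_div_iff₀ h1β]
        nlinarith
      linarith
    linarith
  linarith

/-- One-step bound for the subtransfer operator applied to a dominated nonnegative function. -/
lemma step (hβ : 0 < β) (hβ1 : β ≤ 1) {g : ℝ → ℝ} {C : ℝ} (hC : 0 ≤ C)
    (hg : ∀ y ∈ Ioo (-1:ℝ) 1, 0 ≤ g y ∧ g y ≤ C / (1 - y ^ 2))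
    (hx : x ∈ Ioo (-1:ℝ) 1) :
    0 ≤ Tsub β g x ∧ Tsub β g x ≤ C * ∑' j : {j : ℤ // j ≠ 0}, Bb β x (j : ℤ) := by
  have hmem : ∀ j : {j : ℤ // j ≠ 0}, (-β / (x + 2 * ((j : ℤ) : ℝ))) ∈ Ioo (-1:ℝ) 1 := by
    intro j
    have hq := q_sq_gt hx j.2
    have hq0 : (x + 2 * ((j : ℤ) : ℝ)) ≠ 0 := by
      intro h; rw [h] at hq; norm_num at hq
    have hp2 : (-β / (x + 2 * ((j : ℤ) : ℝ))) ^ 2 < 1 := by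
      have e : (-β / (x + 2 * ((j : ℤ) : ℝ))) ^ 2 = β ^ 2 / (x + 2 * ((j : ℤ) : ℝ)) ^ 2 := by
        rw [div_pow]; congr 1; ring
      rw [e, div_lt_one (by positivity)]
      nlinarith
    constructor <;> nlinarith [hp2]
  have hpden : ∀ j : {j : ℤ // j ≠ 0}, (0:ℝ) < 1 - (-β / (x + 2 * ((j : ℤ) : ℝ))) ^ 2 := by
    intro j
    have := (hmem j).1
    have := (hmem j).2
    nlinarith
  have hw : ∀ j : {j : ℤ // j ≠ 0}, (0:ℝ) ≤ β / (x + 2 * ((j : ℤ) : ℝ)) ^ 2 :=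
    fun j => div_nonneg hβ.le (sq_nonneg _)
  have hterm0 : ∀ j : {j : ℤ // j ≠ 0},
      0 ≤ (β / (x + 2 * ((j : ℤ) : ℝ)) ^ 2) * g (-β / (x + 2 * ((j : ℤ) : ℝ))) :=
    fun j => mul_nonneg (hw j) ((hg _ (hmem j)).1)
  have htermle : ∀ j : {j : ℤ // j ≠ 0},
      (β / (x + 2 * ((j : ℤ) : ℝ)) ^ 2) * g (-β / (x + 2 * ((j : ℤ) : ℝ)))
        ≤ C * Bb β x (j : ℤ) := by
    intro j
    have hq := q_sq_gt hx j.2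
    calc (β / (x + 2 * ((j : ℤ) : ℝ)) ^ 2) * g (-β / (x + 2 * ((j : ℤ) : ℝ)))
        ≤ (β / (x + 2 * ((j : ℤ) : ℝ)) ^ 2) * (C / (1 - (-β / (x + 2 * ((j : ℤ) : ℝ))) ^ 2)) :=
          mul_le_mul_of_nonneg_left ((hg _ (hmem j)).2) (hw j)
      _ = C * ((β / (x + 2 * ((j : ℤ) : ℝ)) ^ 2) * (1 / (1 - (-β / (x + 2 * ((j : ℤ) : ℝ))) ^ 2))) := by
          ring
      _ = C * Bb β x (j : ℤ) := by rw [alg2 hβ hβ1 hq]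
  have hsummB := (hasSum_B hβ hβ1 hx).summable
  have hsummT : Summable (fun j : {j : ℤ // j ≠ 0} =>
      (β / (x + 2 * ((j : ℤ) : ℝ)) ^ 2) * g (-β / (x + 2 * ((j : ℤ) : ℝ)))) :=
    Summable.of_nonneg_of_le hterm0 htermle (hsummB.mul_left C)
  constructor
  · exact tsum_nonneg hterm0
  · calc Tsub β g x ≤ ∑' j : {j : ℤ // j ≠ 0}, C * Bb β x (j : ℤ) :=
        Summable.tsum_le_tsum htermle hsummT (hsummB.mul_left C)
    _ = C * ∑' j : {j : ℤ // j ≠ 0}, Bb β x (j : ℤ) := tsum_mul_left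

end SubtransferAux

open SubtransferAux in
/-- Subinvariance of the key functions `κ_β` and `κ₁` under the subtransfer operator:
(a) `T_β κ_β = κ₁` on `(-1,1)`, with absolute convergence of the series;
(b) `0 ≤ T_β^n κ₁ ≤ β^n κ₁` on `(-1,1)`;
(c) for `β < 1`, `T_β^n κ₁ ≤ 2β^n/(1-β)` on `(-1,1)`. -/
theorem subtransfer_kappa_subinvariance
    (β : ℝ) (hβ0 : 0 < β) (hβ1 : β ≤ 1) :
    (∀ x ∈ Ioo (-1 : ℝ) 1,
      Summable (fun j : {j : ℤ // j ≠ 0} =>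
        |(β / (x + 2 * ((j : ℤ) : ℝ)) ^ 2) * kap β (-β / (x + 2 * ((j : ℤ) : ℝ)))|) ∧
      Tsub β (kap β) x = 1 / (1 - x ^ 2)) ∧
    (∀ n : ℕ, 1 ≤ n → ∀ x ∈ Ioo (-1 : ℝ) 1,
      0 ≤ (Tsub β)^[n] (kap 1) x ∧ (Tsub β)^[n] (kap 1) x ≤ β ^ n / (1 - x ^ 2)) ∧
    (β < 1 → ∀ n : ℕ, 1 ≤ n → ∀ x ∈ Ioo (-1 : ℝ) 1,
      (Tsub β)^[n] (kap 1) x ≤ 2 * β ^ n / (1 - β)) := by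
  have key_b : ∀ n : ℕ, ∀ x ∈ Ioo (-1 : ℝ) 1,
      0 ≤ (Tsub β)^[n] (kap 1) x ∧ (Tsub β)^[n] (kap 1) x ≤ β ^ n / (1 - x ^ 2) := by
    intro n
    induction n with
    | zero =>
      intro x hx
      obtain ⟨hx1, hx2⟩ := hx
      have hx2' : (0:ℝ) < 1 - x ^ 2 := by nlinarith
      have he : (Tsub β)^[0] (kap 1) x = 1 / (1 - x ^ 2) := by
        simp [kap]
      rw [he]
      constructor
      · positivity
      · rw [pow_zero]
    | succ n ih =>
      intro x hx
      rw [Function.iterate_succ_apply']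
      have hs := step hβ0 hβ1 (C := β ^ n) (pow_nonneg hβ0.le n) ih hx
      refine ⟨hs.1, hs.2.trans ?_⟩
      calc β ^ n * ∑' j : {j : ℤ // j ≠ 0}, Bb β x (j : ℤ)
          ≤ β ^ n * (β / (1 - x ^ 2)) :=
            mul_le_mul_of_nonneg_left (tsum_B_le hβ0 hβ1 hx) (pow_nonneg hβ0.le n)
        _ = β ^ (n + 1) / (1 - x ^ 2) := by rw [pow_succ]; ring
  refine ⟨?_, fun n _ x hx => key_b n x hx, ?_⟩
  · intro x hx
    constructor
    · have he : (fun j : {j : ℤ // j ≠ 0} =>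
          |(β / (x + 2 * ((j : ℤ) : ℝ)) ^ 2) * kap β (-β / (x + 2 * ((j : ℤ) : ℝ)))|)
          = fun j : {j : ℤ // j ≠ 0} => Aa x (j : ℤ) := by
        funext j
        rw [alg1 hβ0 (q_sq_gt hx j.2), abs_of_nonneg (A_nonneg (q_sq_gt hx j.2))]
      rw [he]
      exact (hasSum_A hx).summable
    · have he : Tsub β (kap β) x = ∑' j : {j : ℤ // j ≠ 0}, Aa x (j : ℤ) := by
        simp only [Tsub]
        exact tsum_congr fun j => alg1 hβ0 (q_sq_gt hx j.2)
      rw [he, (hasSum_A hx).tsum_eq]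
  · intro hβlt n hn x hx
    obtain ⟨m, rfl⟩ : ∃ m, n = m + 1 := ⟨n - 1, by omega⟩
    rw [Function.iterate_succ_apply']
    have hs := step hβ0 hβ1 (C := β ^ m) (pow_nonneg hβ0.le m) (key_b m) hx
    refine hs.2.trans ?_
    calc β ^ m * ∑' j : {j : ℤ // j ≠ 0}, Bb β x (j : ℤ)
        ≤ β ^ m * (2 * β / (1 - β)) :=
          mul_le_mul_of_nonneg_left (tsum_B_le2 hβ0 hβlt hx) (pow_nonneg hβ0.le m)
      _ = 2 * β ^ (m + 1) / (1 - β) := by rw [pow_succ]; ring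
end

section
/- Fix 0 < β ≤ 1. If f : [−β,β] → ℝ is continuous, then for every x ∈ [−1,1] the series (T_β f)(x) = ∑_{j∈ℤ, j≠0} (β/(x+2j)²)·f(−β/(x+2j)) converges absolutely, and the resulting function T_β f is continuous on the closed interval [−1,1]. If, in addition, f is odd (f(−t) = −f(t) for t ∈ [−β,β]), then (T_β f)(1) = β·f(β). -/
open MeasureTheory Set Filter

lemma Tsub_abs_aux {x : ℝ} (hx : x ∈ Icc (-1:ℝ) 1) {j : ℤ} (hj : j ≠ 0) :
    |(j:ℝ)| ≤ |x + 2 * (j:ℝ)| ∧ 1 ≤ |x + 2 * (j:ℝ)| := by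
  have h1 : (1:ℝ) ≤ |(j:ℝ)| := by
    rw [← Int.cast_abs]
    exact_mod_cast Int.one_le_abs hj
  have hx1 : |x| ≤ 1 := abs_le.2 ⟨hx.1, hx.2⟩
  have h2 : |2*(j:ℝ)| ≤ |x + 2*(j:ℝ)| + |x| := by
    have he : (2*(j:ℝ)) = (x + 2*(j:ℝ)) + (-x) := by ring
    calc |2*(j:ℝ)| = |(x + 2*(j:ℝ)) + (-x)| := by rw [← he]
      _ ≤ |x + 2*(j:ℝ)| + |(-x)| := abs_add_le _ _
      _ = |x + 2*(j:ℝ)| + |x| := by rw [abs_neg]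
  have h3 : |2*(j:ℝ)| = 2*|(j:ℝ)| := by rw [abs_mul, abs_two]
  constructor <;> linarith

lemma Tsub_mem_aux {β : ℝ} (hβ0 : 0 < β) {d : ℝ} (hd : 1 ≤ |d|) :
    -β / d ∈ Icc (-β) β := by
  have : |(-β)/d| ≤ β := by
    rw [abs_div, abs_neg, abs_of_pos hβ0]
    calc β / |d| ≤ β / 1 := by
          apply div_le_div_of_nonneg_left hβ0.le one_pos hd
      _ = β := div_one β
  exact abs_le.1 this

lemma Tsub_bound_aux {β C : ℝ} (hβ0 : 0 < β) (hC0 : 0 ≤ C) {f : ℝ → ℝ}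
    (hC : ∀ t ∈ Icc (-β) β, |f t| ≤ C) {x : ℝ} (hx : x ∈ Icc (-1:ℝ) 1)
    {j : ℤ} (hj : j ≠ 0) :
    |(β / (x + 2 * (j:ℝ)) ^ 2) * f (-β / (x + 2 * (j:ℝ)))| ≤ β * C / (j:ℝ)^2 := by
  obtain ⟨hjd, h1d⟩ := Tsub_abs_aux hx hj
  set d := x + 2*(j:ℝ)
  have hj0 : (0:ℝ) < (j:ℝ)^2 := by
    have : (j:ℝ) ≠ 0 := Int.cast_ne_zero.2 hj
    positivity
  have hsq : (j:ℝ)^2 ≤ d^2 := by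
    calc (j:ℝ)^2 = |(j:ℝ)|^2 := (sq_abs _).symm
      _ ≤ |d|^2 := pow_le_pow_left₀ (abs_nonneg _) hjd 2
      _ = d^2 := sq_abs _
  have hfb : |f (-β / d)| ≤ C := hC _ (Tsub_mem_aux hβ0 h1d)
  have hd2 : (0:ℝ) < d^2 := lt_of_lt_of_le hj0 hsq
  have hfrac : β / d^2 ≤ β / (j:ℝ)^2 :=
    div_le_div_of_nonneg_left hβ0.le hj0 hsq
  calc |(β / d^2) * f (-β / d)| = (β / d^2) * |f (-β / d)| := by
        rw [abs_mul, abs_of_pos (div_pos hβ0 hd2)]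
    _ ≤ (β / (j:ℝ)^2) * C := by
        apply mul_le_mul hfrac hfb (abs_nonneg _) (by positivity)
    _ = β * C / (j:ℝ)^2 := by ring

/-- If `f` is continuous on `[-β,β]` then the series defining `T_β f` converges absolutely
at every point of `[-1,1]`, `T_β f` is continuous on `[-1,1]`, and if moreover `f` is odd
then `T_β f(1) = β f(β)`. -/
theorem subtransfer_continuous_and_endpoint_value
    (β : ℝ) (hβ0 : 0 < β) (hβ1 : β ≤ 1) (f : ℝ → ℝ)
    (hf : ContinuousOn f (Icc (-β) β)) :
    (∀ x ∈ Icc (-1 : ℝ) 1,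
      Summable (fun j : {j : ℤ // j ≠ 0} =>
        |(β / (x + 2 * ((j : ℤ) : ℝ)) ^ 2) * f (-β / (x + 2 * ((j : ℤ) : ℝ)))|)) ∧
    ContinuousOn (Tsub β f) (Icc (-1 : ℝ) 1) ∧
    ((∀ t ∈ Icc (-β) β, f (-t) = -f t) → Tsub β f 1 = β * f β) := by
  -- bound on f
  obtain ⟨C, hC⟩ := (isCompact_Icc : IsCompact (Icc (-β) β)).exists_bound_of_continuousOn hf
  simp only [Real.norm_eq_abs] at hC
  have hC0 : 0 ≤ C := le_trans (abs_nonneg _) (hC 0 ⟨by linarith, hβ0.le⟩)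
  -- majorant series
  have hu : Summable (fun j : {j : ℤ // j ≠ 0} => β * C / ((j : ℤ) : ℝ)^2) := by
    have h0 : Summable (fun n : ℤ => 1 / (n : ℝ)^2) :=
      Real.summable_one_div_int_pow.2 one_lt_two
    have := (h0.comp_injective (Subtype.coe_injective :
      Function.Injective ((↑) : {j : ℤ // j ≠ 0} → ℤ))).mul_left (β * C)
    refine this.congr fun j => ?_
    simp only [Function.comp]; rw [mul_one_div]
  have hbound : ∀ (j : {j : ℤ // j ≠ 0}) (x : ℝ), x ∈ Icc (-1:ℝ) 1 →
      ‖(β / (x + 2 * ((j : ℤ) : ℝ)) ^ 2) * f (-β / (x + 2 * ((j : ℤ) : ℝ)))‖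
        ≤ β * C / ((j : ℤ) : ℝ)^2 := by
    intro j x hx
    rw [Real.norm_eq_abs]
    exact Tsub_bound_aux hβ0 hC0 hC hx j.2
  have part1 : ∀ x ∈ Icc (-1 : ℝ) 1,
      Summable (fun j : {j : ℤ // j ≠ 0} =>
        |(β / (x + 2 * ((j : ℤ) : ℝ)) ^ 2) * f (-β / (x + 2 * ((j : ℤ) : ℝ)))|) := by
    intro x hx
    refine Summable.of_nonneg_of_le (fun j => abs_nonneg _) (fun j => ?_) hu
    exact Tsub_bound_aux hβ0 hC0 hC hx j.2
  refine ⟨part1, ?_, ?_⟩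
  · -- continuity
    have hcont : ∀ j : {j : ℤ // j ≠ 0}, ContinuousOn
        (fun x => (β / (x + 2 * ((j : ℤ) : ℝ)) ^ 2) * f (-β / (x + 2 * ((j : ℤ) : ℝ))))
        (Icc (-1:ℝ) 1) := by
      intro j
      have hd : ∀ x ∈ Icc (-1:ℝ) 1, x + 2 * ((j : ℤ) : ℝ) ≠ 0 := by
        intro x hx h
        have := (Tsub_abs_aux hx j.2).2
        rw [h, abs_zero] at this; linarith
      have hden : ContinuousOn (fun x : ℝ => x + 2 * ((j : ℤ) : ℝ)) (Icc (-1:ℝ) 1) :=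
        (continuous_id.add continuous_const).continuousOn
      have h1 : ContinuousOn (fun x : ℝ => β / (x + 2 * ((j : ℤ) : ℝ)) ^ 2) (Icc (-1:ℝ) 1) :=
        continuousOn_const.div (hden.pow 2) (fun x hx => pow_ne_zero 2 (hd x hx))
      have hg : ContinuousOn (fun x : ℝ => -β / (x + 2 * ((j : ℤ) : ℝ))) (Icc (-1:ℝ) 1) :=
        continuousOn_const.div hden hd
      have hmaps : ∀ x ∈ Icc (-1:ℝ) 1, -β / (x + 2 * ((j : ℤ) : ℝ)) ∈ Icc (-β) β :=
        fun x hx => Tsub_mem_aux hβ0 (Tsub_abs_aux hx j.2).2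
      exact h1.mul (hf.comp hg hmaps)
    exact continuousOn_tsum hcont hu hbound
  · -- endpoint
    intro hodd
    set F1 : ℤ → ℝ := fun j => (β / ((1:ℝ) + 2 * (j:ℝ)) ^ 2) * f (-β / (1 + 2 * (j:ℝ))) with hF1
    have hsum_sub : Summable (fun j : {j : ℤ // j ≠ 0} => F1 j) :=
      (part1 1 ⟨by norm_num, le_refl 1⟩).of_abs
    set G := Set.indicator {j : ℤ | j ≠ 0} F1 with hG
    have hGsum : Summable G := summable_subtype_iff_indicator.1 hsum_sub
    have hT : Tsub β f 1 = ∑' j : ℤ, G j := tsum_subtype {j : ℤ | j ≠ 0} F1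
    set c : ℝ := β * f β with hc
    set h : ℤ → ℝ := fun j => if j = 0 ∨ j = -1 then c else 0 with hh
    -- value at -1
    have hodd' : ∀ j : ℤ, j ≠ 0 → j ≠ -1 → F1 (-1 - j) = -F1 j := by
      intro j hj0 hj1
      have hne : (1:ℤ) + 2*j ≠ 0 := by omega
      have habs : 1 ≤ |(1:ℝ) + 2*(j:ℝ)| := by
        have : (1:ℤ) ≤ |1 + 2*j| := Int.one_le_abs hne
        have h2 : ((|1 + 2*j| : ℤ) : ℝ) = |(1:ℝ) + 2*(j:ℝ)| := by
          push_cast [Int.cast_abs]; norm_num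
        rw [← h2]; exact_mod_cast this
      have harg : (1:ℝ) + 2 * ((-1 - j : ℤ):ℝ) = -((1:ℝ) + 2*(j:ℝ)) := by
        push_cast; ring
      have hfodd : f (β / (1 + 2*(j:ℝ))) = - f (-β / (1 + 2*(j:ℝ))) := by
        have hm : -β / (1 + 2*(j:ℝ)) ∈ Icc (-β) β := Tsub_mem_aux hβ0 habs
        have := hodd _ hm
        rw [show -(-β / (1 + 2*(j:ℝ))) = β / (1 + 2*(j:ℝ)) by ring] at this
        rw [this]
      have hd0 : (1:ℝ) + 2*(j:ℝ) ≠ 0 := by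
        intro h; rw [h, abs_zero] at habs; linarith
      simp only [hF1, harg]
      rw [show -β / -((1:ℝ) + 2*(j:ℝ)) = β / (1 + 2*(j:ℝ)) by rw [neg_div_neg_eq]]
      rw [hfodd, neg_pow, show (-1:ℝ)^2 = 1 by norm_num, one_mul]
      ring
    have hF1m1 : F1 (-1) = c := by
      simp only [hF1, hc]
      norm_num
    have key : ∀ j : ℤ, G (-1 - j) = -G j + h j := by
      intro j
      rcases eq_or_ne j 0 with rfl | hj0
      · simp only [hh, hG]
        rw [Set.indicator_of_mem (by simp : (-1 - 0 : ℤ) ∈ {j : ℤ | j ≠ 0}),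
            Set.indicator_of_notMem (by simp : ¬((0:ℤ) ∈ {j : ℤ | j ≠ 0}))]
        simpa using hF1m1
      rcases eq_or_ne j (-1) with rfl | hj1
      · simp only [hh, hG]
        rw [show (-1 - (-1) : ℤ) = 0 by ring,
            Set.indicator_of_notMem (by simp : ¬((0:ℤ) ∈ {j : ℤ | j ≠ 0})),
            Set.indicator_of_mem (by simp : (-1 : ℤ) ∈ {j : ℤ | j ≠ 0})]
        simp [hF1m1]
      · simp only [hh, hG]
        have hm1 : (-1 - j : ℤ) ∈ {j : ℤ | j ≠ 0} := by simp; omega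
        have hm2 : j ∈ {j : ℤ | j ≠ 0} := hj0
        rw [Set.indicator_of_mem hm1, Set.indicator_of_mem hm2, hodd' j hj0 hj1]
        simp [hj0, hj1]
    have hhsum : Summable h := by
      apply summable_of_ne_finset_zero (s := ({0, -1} : Finset ℤ))
      intro j hj
      simp only [Finset.mem_insert, Finset.mem_singleton] at hj
      push_neg at hj
      simp [hh, hj.1, hj.2]
    have hhsumval : ∑' j : ℤ, h j = 2 * c := by
      rw [tsum_eq_sum (s := ({0, -1} : Finset ℤ))
        (by intro j hj
            simp only [Finset.mem_insert, Finset.mem_singleton] at hj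
            push_neg at hj
            simp [hh, hj.1, hj.2])]
      rw [Finset.sum_pair (by decide : (0:ℤ) ≠ -1)]
      simp [hh]; ring
    have e1 : ∑' j : ℤ, G j = ∑' j : ℤ, G (-1 - j) :=
      ((Equiv.subLeft (-1:ℤ)).tsum_eq G).symm
    have e2 : ∑' j : ℤ, G (-1 - j) = ∑' j : ℤ, (-G j + h j) := tsum_congr key
    have e3 : ∑' j : ℤ, (-G j + h j) = -(∑' j : ℤ, G j) + ∑' j : ℤ, h j := by
      rw [Summable.tsum_add hGsum.neg hhsum, tsum_neg]
    have : ∑' j : ℤ, G j = c := by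
      have := e1.trans (e2.trans e3)
      rw [hhsumval] at this
      linarith
    rw [hT, this]
end

section
/- Let γ > 0 and let g_γ(t) := t·√(γ²−t²) for t ∈ [−γ,γ], extended by zero outside [−γ,γ]. Then: (a) for every real x with |x| > γ, (1/π)·∫_{−γ}^{γ} g_γ(t)/(x−t) dt = x² − γ²/2 − |x|·√(x²−γ²); (b) for every x with |x| < γ, the principal value lim_{ε→0⁺} (1/π)·∫_{[−γ,γ]∖(x−ε,x+ε)} g_γ(t)/(x−t) dt exists and equals x² − γ²/2. -/
open MeasureTheory Set Filter

/-- `g_γ(t) = t √(γ² - t²)` on `[-γ,γ]`, extended by zero. -/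
noncomputable def gfun (γ t : ℝ) : ℝ :=
  if t ∈ Icc (-γ) γ then t * Real.sqrt (γ ^ 2 - t ^ 2) else 0

/- ## Auxiliary antiderivatives -/

/-- Antiderivative for the interior case `|x| < γ`. -/
noncomputable def Gin (γ x t : ℝ) : ℝ :=
  (x^2 - γ^2/2) * Real.arcsin (t/γ) - (t/2 + x) * Real.sqrt (γ^2 - t^2)
    + x * Real.sqrt (γ^2 - x^2) *
      (Real.log (γ^2 - x*t + Real.sqrt (γ^2 - x^2) * Real.sqrt (γ^2 - t^2)) - Real.log (x - t))

/-- The "regular part" of `Gin`. -/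
noncomputable def Gphi (γ x t : ℝ) : ℝ :=
  (x^2 - γ^2/2) * Real.arcsin (t/γ) - (t/2 + x) * Real.sqrt (γ^2 - t^2)
    + x * Real.sqrt (γ^2 - x^2) *
      Real.log (γ^2 - x*t + Real.sqrt (γ^2 - x^2) * Real.sqrt (γ^2 - t^2))

lemma Gin_eq_Gphi (γ x t : ℝ) :
    Gin γ x t = Gphi γ x t - x * Real.sqrt (γ^2 - x^2) * Real.log (x - t) := by
  unfold Gin Gphi; ring

/-- Antiderivative for the exterior case `x > γ`. -/
noncomputable def Gout (γ x t : ℝ) : ℝ :=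
  (x^2 - γ^2/2) * Real.arcsin (t/γ) - (t/2 + x) * Real.sqrt (γ^2 - t^2)
    + x * Real.sqrt (x^2 - γ^2) * Real.arcsin ((γ^2 - x*t)/(γ*(x - t)))

lemma sq_pos_of_Ioo {γ t : ℝ} (ht : t ∈ Ioo (-γ) γ) : 0 < γ^2 - t^2 := by
  have h1 := ht.1; have h2 := ht.2; nlinarith

lemma hasDerivAt_arcsin_div {γ t : ℝ} (hγ : 0 < γ) (ht : t ∈ Ioo (-γ) γ) :
    HasDerivAt (fun u => Real.arcsin (u/γ)) (1 / Real.sqrt (γ^2 - t^2)) t := by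
  have h1 : t/γ ≠ -1 := by
    intro h
    have : t = -γ := by field_simp at h; linarith
    exact absurd ht.1 (by rw [this]; exact lt_irrefl _)
  have h2 : t/γ ≠ 1 := by
    intro h
    have ht2 : t = γ := by field_simp at h; exact h
    exact absurd ht.2 (by rw [ht2]; exact lt_irrefl _)
  have hd := (Real.hasDerivAt_arcsin h1 h2).comp t ((hasDerivAt_id t).div_const γ)
  refine hd.congr_deriv (Eq.symm ?_)
  have h3 : 1 - (t/γ)^2 = (γ^2 - t^2)/γ^2 := by field_simp
  rw [h3, Real.sqrt_div (sq_pos_of_Ioo ht).le, Real.sqrt_sq hγ.le]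
  have hr : Real.sqrt (γ^2 - t^2) ≠ 0 :=
    (Real.sqrt_pos.mpr (sq_pos_of_Ioo ht)).ne'
  field_simp

lemma hasDerivAt_rfun {γ t : ℝ} (ht : t ∈ Ioo (-γ) γ) :
    HasDerivAt (fun u => Real.sqrt (γ^2 - u^2)) (-t / Real.sqrt (γ^2 - t^2)) t := by
  have hpos := sq_pos_of_Ioo ht
  have hinner : HasDerivAt (fun u : ℝ => γ^2 - u^2) (-(2*t)) t := by
    simpa using (hasDerivAt_pow 2 t).const_sub (γ^2)
  have hd := hinner.sqrt hpos.ne'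
  convert hd using 1
  rw [eq_div_iff (by positivity)]
  field_simp

lemma Npos {γ x t : ℝ} (hγ : 0 < γ) (hx : |x| < γ) (ht : t ∈ Icc (-γ) γ) :
    0 < γ^2 - x*t + Real.sqrt (γ^2 - x^2) * Real.sqrt (γ^2 - t^2) := by
  have habs : |t| ≤ γ := abs_le.mpr ⟨ht.1, ht.2⟩
  have h1 : x*t ≤ |x| * γ := by
    have := le_abs_self (x*t)
    rw [abs_mul] at this
    nlinarith [abs_nonneg x, abs_nonneg t, abs_le.mp habs]
  have h2 : |x| * γ < γ^2 := by nlinarith [abs_nonneg x]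
  nlinarith [Real.sqrt_nonneg (γ^2-x^2), Real.sqrt_nonneg (γ^2-t^2)]

lemma hasDerivAt_Gin {γ x t : ℝ} (hγ : 0 < γ) (hx : |x| < γ) (ht : t ∈ Ioo (-γ) γ)
    (hne : t ≠ x) :
    HasDerivAt (Gin γ x) (t * Real.sqrt (γ^2 - t^2) / (x - t)) t := by
  set r := Real.sqrt (γ^2 - t^2) with hrdef
  set s := Real.sqrt (γ^2 - x^2) with hsdef
  have hrpos : 0 < r := Real.sqrt_pos.mpr (sq_pos_of_Ioo ht)
  have hr2 : r^2 = γ^2 - t^2 := Real.sq_sqrt (sq_pos_of_Ioo ht).le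
  have hs2 : s^2 = γ^2 - x^2 := Real.sq_sqrt (by nlinarith [abs_nonneg x, sq_abs x] : (0:ℝ) ≤ γ^2 - x^2)
  have hNpos : 0 < γ^2 - x*t + s*r := Npos hγ hx (Ioo_subset_Icc_self ht)
  have hxt : x - t ≠ 0 := fun h => hne (by linarith [sub_eq_zero.mp h])
  have hA : HasDerivAt (fun u => (x^2 - γ^2/2) * Real.arcsin (u/γ))
      ((x^2 - γ^2/2) * (1/r)) t := (hasDerivAt_arcsin_div hγ ht).const_mul _
  have hB : HasDerivAt (fun u => (u/2 + x) * Real.sqrt (γ^2 - u^2))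
      ((1/2) * r + (t/2 + x) * (-t/r)) t := by
    have h1 : HasDerivAt (fun u : ℝ => u/2 + x) (1/2) t := by
      simpa using ((hasDerivAt_id t).div_const 2).add_const x
    exact h1.mul (hasDerivAt_rfun ht)
  have hN : HasDerivAt (fun u => γ^2 - x*u + s * Real.sqrt (γ^2 - u^2))
      (-x + s * (-t/r)) t := by
    have h1 : HasDerivAt (fun u : ℝ => γ^2 - x*u) (-x) t := by
      simpa using ((hasDerivAt_id t).const_mul x).const_sub (γ^2)
    exact h1.add ((hasDerivAt_rfun ht).const_mul s)
  have hlogN : HasDerivAt (fun u => Real.log (γ^2 - x*u + s * Real.sqrt (γ^2 - u^2)))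
      ((-x + s * (-t/r)) / (γ^2 - x*t + s*r)) t := hN.log hNpos.ne'
  have hlogx : HasDerivAt (fun u => Real.log (x - u)) (-1 / (x - t)) t := by
    have h1 : HasDerivAt (fun u : ℝ => x - u) (-1) t := by
      simpa using (hasDerivAt_id t).const_sub x
    exact h1.log hxt
  have hC := (hlogN.sub hlogx).const_mul (x * s)
  have htot := (hA.sub hB).add hC
  have hrne := hrpos.ne'
  have hNne := hNpos.ne'
  have hbr : ((-x + s * (-t/r)) / (γ^2 - x*t + s*r) - -1/(x-t)) = s / (r*(x-t)) := by
    field_simp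
    linear_combination s * hr2 - r * hs2
  rw [hbr] at hC htot
  refine htot.congr_deriv (Eq.symm ?_)
  field_simp
  linear_combination (x+t) * hr2 - 2*x * hs2

lemma hasDerivAt_Gout {γ x t : ℝ} (hγ : 0 < γ) (hx : γ < x) (ht : t ∈ Ioo (-γ) γ) :
    HasDerivAt (Gout γ x) (t * Real.sqrt (γ^2 - t^2) / (x - t)) t := by
  set r := Real.sqrt (γ^2 - t^2) with hrdef
  set s := Real.sqrt (x^2 - γ^2) with hsdef
  have htpos := sq_pos_of_Ioo ht
  have hrpos : 0 < r := Real.sqrt_pos.mpr htpos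
  have hr2 : r^2 = γ^2 - t^2 := Real.sq_sqrt htpos.le
  have hxg : 0 < x^2 - γ^2 := by nlinarith
  have hspos : 0 < s := Real.sqrt_pos.mpr hxg
  have hs2 : s^2 = x^2 - γ^2 := Real.sq_sqrt hxg.le
  have hxt : 0 < x - t := by have := ht.2; linarith
  have hgxt : γ*(x - t) ≠ 0 := by positivity
  have h1q : 1 - ((γ^2 - x*t)/(γ*(x - t)))^2 = (s*r/(γ*(x-t)))^2 := by
    field_simp
    linear_combination (γ^2 - x^2) * hr2 - r^2 * hs2
  have hqlt : ((γ^2 - x*t)/(γ*(x - t)))^2 < 1 := by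
    nlinarith [h1q, mul_pos hspos hrpos, mul_pos hγ hxt,
      pow_pos (div_pos (mul_pos hspos hrpos) (mul_pos hγ hxt)) 2]
  have hq1 : (γ^2 - x*t)/(γ*(x - t)) ≠ -1 := by
    intro h; rw [h] at hqlt; norm_num at hqlt
  have hq2 : (γ^2 - x*t)/(γ*(x - t)) ≠ 1 := by
    intro h; rw [h] at hqlt; norm_num at hqlt
  have hqder : HasDerivAt (fun u => (γ^2 - x*u)/(γ*(x - u)))
      ((-x * (γ*(x-t)) - (γ^2 - x*t) * (-γ)) / (γ*(x-t))^2) t := by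
    have hf : HasDerivAt (fun u : ℝ => γ^2 - x*u) (-x) t := by
      simpa using ((hasDerivAt_id t).const_mul x).const_sub (γ^2)
    have hg : HasDerivAt (fun u : ℝ => γ*(x - u)) (-γ) t := by
      simpa using ((hasDerivAt_id t).const_sub x).const_mul γ
    exact hf.div hg hgxt
  have harc := (Real.hasDerivAt_arcsin hq1 hq2).comp t hqder
  have hsq : Real.sqrt (1 - ((γ^2 - x*t)/(γ*(x - t)))^2) = s*r/(γ*(x-t)) := by
    rw [h1q, Real.sqrt_sq (by positivity)]
  rw [hsq] at harc
  have hA : HasDerivAt (fun u => (x^2 - γ^2/2) * Real.arcsin (u/γ))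
      ((x^2 - γ^2/2) * (1/r)) t := (hasDerivAt_arcsin_div hγ ht).const_mul _
  have hB : HasDerivAt (fun u => (u/2 + x) * Real.sqrt (γ^2 - u^2))
      ((1/2) * r + (t/2 + x) * (-t/r)) t := by
    have h1 : HasDerivAt (fun u : ℝ => u/2 + x) (1/2) t := by
      simpa using ((hasDerivAt_id t).div_const 2).add_const x
    exact h1.mul (hasDerivAt_rfun ht)
  have hC := harc.const_mul (x*s)
  have htot := (hA.sub hB).add hC
  refine htot.congr_deriv (Eq.symm ?_)
  have hrne := hrpos.ne'
  have hsne := hspos.ne'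
  have hxtne : x - t ≠ 0 := hxt.ne'
  show _ = _ + x*s*(1 / (s*r/(γ*(x-t))) * ((-x * (γ*(x-t)) - (γ^2 - x*t) * (-γ)) / (γ*(x-t))^2))
  field_simp
  linear_combination (x+t) * hr2

lemma gfun_eq {γ t : ℝ} (ht : t ∈ Icc (-γ) γ) : gfun γ t = t * Real.sqrt (γ^2 - t^2) := by
  unfold gfun; rw [if_pos ht]

lemma contOn_integrand {γ x a b : ℝ} (hxn : x ∉ Icc a b) :
    ContinuousOn (fun t => t * Real.sqrt (γ^2 - t^2) / (x - t)) (Icc a b) := by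
  apply ContinuousOn.div
  · exact (continuous_id.mul (Real.continuous_sqrt.comp (by fun_prop))).continuousOn
  · fun_prop
  · intro t ht h
    exact hxn (by rw [sub_eq_zero.mp h]; exact ht)

lemma contOn_Gin {γ x a b : ℝ} (hγ : 0 < γ) (hx : |x| < γ)
    (hsub : Icc a b ⊆ Icc (-γ) γ) (hxn : x ∉ Icc a b) :
    ContinuousOn (Gin γ x) (Icc a b) := by
  intro t ht
  apply ContinuousAt.continuousWithinAt
  have htm := hsub ht
  have hN := (Npos hγ hx htm).ne'
  have hxt : x - t ≠ 0 := sub_ne_zero.mpr (fun h => hxn (h ▸ ht))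
  have c2 : ContinuousAt (fun u : ℝ => Real.sqrt (γ^2 - u^2)) t :=
    Real.continuous_sqrt.continuousAt.comp (by fun_prop)
  have c1 : ContinuousAt (fun u : ℝ => Real.arcsin (u/γ)) t :=
    Real.continuous_arcsin.continuousAt.comp (by fun_prop)
  have cN : ContinuousAt (fun u : ℝ => γ^2 - x*u + Real.sqrt (γ^2-x^2) * Real.sqrt (γ^2 - u^2)) t := by
    apply ContinuousAt.add
    · fun_prop
    · exact c2.const_mul _
  have c3 : ContinuousAt (fun u : ℝ => Real.log (γ^2 - x*u + Real.sqrt (γ^2-x^2) * Real.sqrt (γ^2 - u^2))) t :=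
    ContinuousAt.log cN hN
  have c4 : ContinuousAt (fun u : ℝ => Real.log (x - u)) t :=
    ContinuousAt.log (by fun_prop) hxt
  exact ((c1.const_mul _).sub ((by fun_prop : ContinuousAt (fun u : ℝ => u/2 + x) t).mul c2)).add
    ((c3.sub c4).const_mul _)

lemma contAt_Gphi {γ x : ℝ} (hγ : 0 < γ) (hx : |x| < γ) {t : ℝ} (htm : t ∈ Icc (-γ) γ) :
    ContinuousAt (Gphi γ x) t := by
  have hN := (Npos hγ hx htm).ne'
  have c2 : ContinuousAt (fun u : ℝ => Real.sqrt (γ^2 - u^2)) t :=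
    Real.continuous_sqrt.continuousAt.comp (by fun_prop)
  have c1 : ContinuousAt (fun u : ℝ => Real.arcsin (u/γ)) t :=
    Real.continuous_arcsin.continuousAt.comp (by fun_prop)
  have cN : ContinuousAt (fun u : ℝ => γ^2 - x*u + Real.sqrt (γ^2-x^2) * Real.sqrt (γ^2 - u^2)) t := by
    apply ContinuousAt.add
    · fun_prop
    · exact c2.const_mul _
  have c3 : ContinuousAt (fun u : ℝ => Real.log (γ^2 - x*u + Real.sqrt (γ^2-x^2) * Real.sqrt (γ^2 - u^2))) t :=
    ContinuousAt.log cN hN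
  exact ((c1.const_mul _).sub ((by fun_prop : ContinuousAt (fun u : ℝ => u/2 + x) t).mul c2)).add
    (c3.const_mul _)

lemma contOn_Gout {γ x : ℝ} (hγ : 0 < γ) (hx : γ < x) :
    ContinuousOn (Gout γ x) (Icc (-γ) γ) := by
  intro t ht
  apply ContinuousAt.continuousWithinAt
  have hxt : x - t ≠ 0 := by have := ht.2; intro h; nlinarith [sub_eq_zero.mp h]
  have c2 : ContinuousAt (fun u : ℝ => Real.sqrt (γ^2 - u^2)) t :=
    Real.continuous_sqrt.continuousAt.comp (by fun_prop)
  have c1 : ContinuousAt (fun u : ℝ => Real.arcsin (u/γ)) t :=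
    Real.continuous_arcsin.continuousAt.comp (by fun_prop)
  have cq : ContinuousAt (fun u : ℝ => (γ^2 - x*u)/(γ*(x - u))) t := by
    exact ContinuousAt.div (by fun_prop) (by fun_prop) (mul_ne_zero hγ.ne' hxt)
  have c3 : ContinuousAt (fun u : ℝ => Real.arcsin ((γ^2 - x*u)/(γ*(x - u)))) t :=
    Real.continuous_arcsin.continuousAt.comp cq
  exact ((c1.const_mul _).sub ((by fun_prop : ContinuousAt (fun u : ℝ => u/2 + x) t).mul c2)).add
    (c3.const_mul _)

lemma integral_sub_Gin {γ x a b : ℝ} (hγ : 0 < γ) (hx : |x| < γ) (ha : -γ ≤ a) (hb : b ≤ γ)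
    (hab : a ≤ b) (hxn : x ∉ Icc a b) :
    ∫ t in a..b, t * Real.sqrt (γ^2 - t^2) / (x - t) = Gin γ x b - Gin γ x a := by
  have hsub : Icc a b ⊆ Icc (-γ) γ := Icc_subset_Icc ha hb
  apply intervalIntegral.integral_eq_sub_of_hasDerivAt_of_le hab
    (contOn_Gin hγ hx hsub hxn)
  · intro t ht
    exact hasDerivAt_Gin hγ hx ⟨lt_of_le_of_lt ha ht.1, lt_of_lt_of_le ht.2 hb⟩
      (fun h => hxn (h ▸ Ioo_subset_Icc_self ht))
  · exact ((contOn_integrand hxn).mono (by rw [uIcc_of_le hab])).intervalIntegrable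

lemma integral_sub_Gout {γ x : ℝ} (hγ : 0 < γ) (hx : γ < x) :
    ∫ t in (-γ)..γ, t * Real.sqrt (γ^2 - t^2) / (x - t) = Gout γ x γ - Gout γ x (-γ) := by
  have hxn : x ∉ Icc (-γ) γ := by intro h; exact absurd h.2 (not_le.mpr hx)
  apply intervalIntegral.integral_eq_sub_of_hasDerivAt_of_le (by linarith)
    (contOn_Gout hγ hx)
  · exact fun t ht => hasDerivAt_Gout hγ hx ht
  · exact ((contOn_integrand hxn).mono (by rw [uIcc_of_le (by linarith : -γ ≤ γ)])).intervalIntegrable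

lemma Gout_diff {γ x : ℝ} (hγ : 0 < γ) (hx : γ < x) :
    Gout γ x γ - Gout γ x (-γ)
      = Real.pi * (x^2 - γ^2/2) - Real.pi * (x * Real.sqrt (x^2 - γ^2)) := by
  have h0 : γ ≠ 0 := hγ.ne'
  have hgg : γ^2 - γ^2 = 0 := by ring
  have hgg' : γ^2 - (-γ)^2 = 0 := by ring
  have e1 : (γ^2 - x*γ)/(γ*(x - γ)) = -1 := by
    rw [div_eq_iff (by intro h; rcases mul_eq_zero.mp h with h|h; exacts [h0 h, by nlinarith [sub_eq_zero.mp h]])]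
    ring
  have e2 : (γ^2 - x*(-γ))/(γ*(x - -γ)) = 1 := by
    rw [div_eq_iff (by intro h; rcases mul_eq_zero.mp h with h|h; exacts [h0 h, by nlinarith [sub_eq_zero.mp h]])]
    ring
  unfold Gout
  rw [div_self h0, e1, e2, hgg, hgg']
  have : (-γ)/γ = -1 := by field_simp
  rw [this, Real.sqrt_zero, Real.arcsin_one, Real.arcsin_neg_one]
  ring

lemma Gin_diff {γ x : ℝ} (hγ : 0 < γ) (hx : |x| < γ) :
    Gin γ x γ - Gin γ x (-γ) = Real.pi * (x^2 - γ^2/2) := by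
  have h0 : γ ≠ 0 := hγ.ne'
  have hx1 : x < γ := (abs_lt.mp hx).2
  have hx2 : -γ < x := (abs_lt.mp hx).1
  have hgg : γ^2 - γ^2 = 0 := by ring
  have hgg' : γ^2 - (-γ)^2 = 0 := by ring
  unfold Gin
  rw [div_self h0, hgg, hgg']
  have : (-γ)/γ = -1 := by field_simp
  rw [this, Real.sqrt_zero, Real.arcsin_one, Real.arcsin_neg, Real.arcsin_one]
  have l1 : Real.log (γ^2 - x*γ + Real.sqrt (γ^2 - x^2) * 0) = Real.log γ + Real.log (γ - x) := by
    rw [mul_zero, add_zero, (by ring : γ^2 - x*γ = γ * (γ - x)),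
      Real.log_mul h0 (by linarith : γ - x ≠ 0)]
  have l2 : Real.log (x - γ) = Real.log (γ - x) := by
    rw [(by ring : x - γ = -(γ - x)), Real.log_neg_eq_log]
  have l3 : Real.log (γ^2 - x*(-γ) + Real.sqrt (γ^2 - x^2) * 0) = Real.log γ + Real.log (γ + x) := by
    rw [mul_zero, add_zero, (by ring : γ^2 - x*(-γ) = γ * (γ + x)),
      Real.log_mul h0 (by linarith : γ + x ≠ 0)]
  have l4 : Real.log (x - -γ) = Real.log (γ + x) := by norm_num; rw [add_comm]
  rw [l1, l2, l3, l4]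
  ring

/-- Explicit computation of the Hilbert transform of `g_γ(t) = t√(γ²-t²) 1_{[-γ,γ]}(t)`:
(a) off the support, `(1/π)∫ g_γ(t)/(x-t) dt = x² - γ²/2 - |x|√(x²-γ²)`;
(b) inside `(-γ,γ)` the principal value exists and equals `x² - γ²/2`. -/
theorem hilbert_transform_of_gfun (γ : ℝ) (hγ : 0 < γ) :
    (∀ x : ℝ, γ < |x| →
      (1 / Real.pi) * (∫ t in Icc (-γ) γ, gfun γ t / (x - t)) =
        x ^ 2 - γ ^ 2 / 2 - |x| * Real.sqrt (x ^ 2 - γ ^ 2)) ∧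
    (∀ x : ℝ, |x| < γ →
      Tendsto (fun ε : ℝ =>
          (1 / Real.pi) * ∫ t in (Icc (-γ) γ \ Ioo (x - ε) (x + ε)), gfun γ t / (x - t))
        (nhdsWithin 0 (Ioi 0)) (nhds (x ^ 2 - γ ^ 2 / 2))) := by
  have hπ : Real.pi ≠ 0 := Real.pi_ne_zero
  have hconv : ∀ y : ℝ, (∫ t in Icc (-γ) γ, gfun γ t / (y - t))
      = ∫ t in (-γ)..γ, t * Real.sqrt (γ^2 - t^2) / (y - t) := by
    intro y
    have e1 : (∫ t in Ioc (-γ) γ, gfun γ t / (y - t))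
        = ∫ t in Ioc (-γ) γ, t * Real.sqrt (γ^2 - t^2) / (y - t) :=
      setIntegral_congr_fun measurableSet_Ioc
        (fun t ht => by rw [gfun_eq (Ioc_subset_Icc_self ht)])
    rw [integral_Icc_eq_integral_Ioc, e1, ← intervalIntegral.integral_of_le (by linarith : -γ ≤ γ)]
  constructor
  · -- part (a)
    have key : ∀ x : ℝ, γ < x →
        (∫ t in Icc (-γ) γ, gfun γ t / (x - t)) =
          Real.pi * (x^2 - γ^2/2) - Real.pi * (x * Real.sqrt (x^2 - γ^2)) := by
      intro x hx
      rw [hconv x, integral_sub_Gout hγ hx, Gout_diff hγ hx]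
    intro x hx
    rcases lt_or_ge 0 x with hpos | hneg
    · have hxx : γ < x := by rwa [abs_of_pos hpos] at hx
      rw [key x hxx, abs_of_pos hpos]
      field_simp
    · have hxx : γ < -x := by rwa [abs_of_nonpos hneg] at hx
      have hsym : (∫ t in (-γ)..γ, t * Real.sqrt (γ^2 - t^2) / (x - t))
          = ∫ t in (-γ)..γ, t * Real.sqrt (γ^2 - t^2) / ((-x) - t) := by
        have hcn := intervalIntegral.integral_comp_neg (a := -γ) (b := γ)
          (fun t => t * Real.sqrt (γ^2 - t^2) / ((-x) - t))
        rw [neg_neg] at hcn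
        rw [← hcn]
        apply intervalIntegral.integral_congr
        intro u _
        show u * Real.sqrt (γ^2 - u^2) / (x - u)
          = -u * Real.sqrt (γ^2 - (-u)^2) / (-x - -u)
        rw [neg_sq, (show -x - -u = -(x - u) by ring), neg_mul, neg_div_neg_eq]
      rw [hconv x, hsym, ← hconv (-x), key (-x) hxx, abs_of_nonpos hneg]
      have hsq : (-x)^2 = x^2 := by ring
      rw [hsq]
      field_simp
  · -- part (b)
    intro x hx
    have hx1 : x < γ := (abs_lt.mp hx).2
    have hx2 : -γ < x := (abs_lt.mp hx).1
    set δ := min (γ - x) (γ + x) with hδdef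
    have hδpos : 0 < δ := lt_min (by linarith) (by linarith)
    have hxmem : x ∈ Icc (-γ) γ := ⟨by linarith, by linarith⟩
    -- the limit of the right-hand side expression
    have hc : ContinuousAt (Gphi γ x) x := contAt_Gphi hγ hx hxmem
    have h1 : Tendsto (fun ε : ℝ => x + ε) (nhdsWithin 0 (Ioi 0)) (nhds x) := by
      have : Tendsto (fun ε : ℝ => x + ε) (nhds 0) (nhds (x + 0)) :=
        tendsto_const_nhds.add tendsto_id
      simpa using this.mono_left nhdsWithin_le_nhds
    have h2 : Tendsto (fun ε : ℝ => x - ε) (nhdsWithin 0 (Ioi 0)) (nhds x) := by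
      have : Tendsto (fun ε : ℝ => x - ε) (nhds 0) (nhds (x - 0)) :=
        tendsto_const_nhds.sub tendsto_id
      simpa using this.mono_left nhdsWithin_le_nhds
    have h3 : Tendsto (fun ε => Gphi γ x (x+ε) - Gphi γ x (x-ε))
        (nhdsWithin 0 (Ioi 0)) (nhds (Gphi γ x x - Gphi γ x x)) :=
      (hc.tendsto.comp h1).sub (hc.tendsto.comp h2)
    rw [sub_self] at h3
    have hconst : Tendsto (fun _ : ℝ => Gin γ x γ - Gin γ x (-γ))
        (nhdsWithin 0 (Ioi 0)) (nhds (Gin γ x γ - Gin γ x (-γ))) := tendsto_const_nhds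
    have h4 := (hconst.sub h3).const_mul (1/Real.pi)
    have h5 : (1/Real.pi) * ((Gin γ x γ - Gin γ x (-γ)) - 0) = x^2 - γ^2/2 := by
      rw [Gin_diff hγ hx]; field_simp; ring
    rw [h5] at h4
    -- eventual equality
    have hev : ∀ᶠ ε in nhdsWithin 0 (Ioi (0:ℝ)),
        (1 / Real.pi) * (∫ t in (Icc (-γ) γ \ Ioo (x - ε) (x + ε)), gfun γ t / (x - t))
        = (1/Real.pi) * ((Gin γ x γ - Gin γ x (-γ)) - (Gphi γ x (x+ε) - Gphi γ x (x-ε))) := by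
      filter_upwards [Ioo_mem_nhdsGT_of_mem (Set.mem_Ico.mpr ⟨le_refl (0:ℝ), hδpos⟩)] with ε hε
      have hε0 : 0 < ε := hε.1
      have hεδ : ε < δ := hε.2
      have hpe : x + ε < γ := by
        have := min_le_left (γ - x) (γ + x); simp only [hδdef] at hεδ; linarith [min_le_left (γ - x) (γ + x)]
      have hme : -γ < x - ε := by
        linarith [min_le_right (γ - x) (γ + x)]
      have hset : Icc (-γ) γ \ Ioo (x-ε) (x+ε) = Icc (-γ) (x-ε) ∪ Icc (x+ε) γ := by
        ext t
        simp only [mem_diff, mem_Icc, mem_Ioo, mem_union, not_and, not_lt]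
        constructor
        · rintro ⟨⟨ha1, ha2⟩, ha3⟩
          rcases le_or_gt t (x - ε) with h4' | h4'
          · exact Or.inl ⟨ha1, h4'⟩
          · exact Or.inr ⟨ha3 h4', ha2⟩
        · rintro (⟨ha1, ha2⟩ | ⟨ha1, ha2⟩)
          · exact ⟨⟨ha1, by linarith⟩, fun h4' => by linarith⟩
          · exact ⟨⟨by linarith, ha2⟩, fun h4' => by linarith⟩
      have hxn1 : x ∉ Icc (-γ) (x-ε) := fun h => by linarith [h.2]
      have hxn2 : x ∉ Icc (x+ε) γ := fun h => by linarith [h.1]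
      have heq1 : EqOn (fun t => t * Real.sqrt (γ^2 - t^2) / (x - t))
          (fun t => gfun γ t / (x - t)) (Icc (-γ) (x-ε)) := fun t ht => by
        show t * Real.sqrt (γ^2 - t^2) / (x - t) = gfun γ t / (x - t)
        rw [gfun_eq (Icc_subset_Icc (le_refl _) (by linarith) ht)]
      have hint1 : IntegrableOn (fun t => gfun γ t / (x - t)) (Icc (-γ) (x-ε)) :=
        IntegrableOn.congr_fun
          ((contOn_integrand hxn1).integrableOn_compact isCompact_Icc)
          heq1 measurableSet_Icc
      have heq2 : EqOn (fun t => t * Real.sqrt (γ^2 - t^2) / (x - t))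
          (fun t => gfun γ t / (x - t)) (Icc (x+ε) γ) := fun t ht => by
        show t * Real.sqrt (γ^2 - t^2) / (x - t) = gfun γ t / (x - t)
        rw [gfun_eq (Icc_subset_Icc (by linarith) (le_refl _) ht)]
      have hint2 : IntegrableOn (fun t => gfun γ t / (x - t)) (Icc (x+ε) γ) :=
        IntegrableOn.congr_fun
          ((contOn_integrand hxn2).integrableOn_compact isCompact_Icc)
          heq2 measurableSet_Icc
      have hdisj : Disjoint (Icc (-γ) (x-ε)) (Icc (x+ε) γ) :=
        Set.disjoint_left.mpr (fun t ht1 ht2 => by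
          have := ht1.2; have := ht2.1; linarith)
      rw [hset, setIntegral_union hdisj measurableSet_Icc hint1 hint2]
      have p1 : (∫ t in Icc (-γ) (x-ε), gfun γ t / (x - t))
          = Gin γ x (x-ε) - Gin γ x (-γ) := by
        rw [integral_Icc_eq_integral_Ioc,
          ← intervalIntegral.integral_of_le (by linarith : -γ ≤ x - ε)]
        rw [show (∫ t in (-γ)..(x-ε), gfun γ t / (x - t))
            = ∫ t in (-γ)..(x-ε), t * Real.sqrt (γ^2 - t^2) / (x - t) from
          intervalIntegral.integral_congr (fun t ht => by
            rw [uIcc_of_le (by linarith : -γ ≤ x - ε)] at ht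
            rw [gfun_eq (Icc_subset_Icc (le_refl _) (by linarith) ht)])]
        exact integral_sub_Gin hγ hx (le_refl _) (by linarith) (by linarith) hxn1
      have p2 : (∫ t in Icc (x+ε) γ, gfun γ t / (x - t))
          = Gin γ x γ - Gin γ x (x+ε) := by
        rw [integral_Icc_eq_integral_Ioc,
          ← intervalIntegral.integral_of_le (by linarith : x + ε ≤ γ)]
        rw [show (∫ t in (x+ε)..γ, gfun γ t / (x - t))
            = ∫ t in (x+ε)..γ, t * Real.sqrt (γ^2 - t^2) / (x - t) from
          intervalIntegral.integral_congr (fun t ht => by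
            rw [uIcc_of_le (by linarith : x + ε ≤ γ)] at ht
            rw [gfun_eq (Icc_subset_Icc (by linarith) (le_refl _) ht)])]
        exact integral_sub_Gin hγ hx (by linarith) (le_refl _) (by linarith) hxn2
      rw [p1, p2]
      have q1 : Gin γ x (x+ε) = Gphi γ x (x+ε)
          - x * Real.sqrt (γ^2-x^2) * Real.log ε := by
        rw [Gin_eq_Gphi, (show x - (x+ε) = -ε by ring), Real.log_neg_eq_log]
      have q2 : Gin γ x (x-ε) = Gphi γ x (x-ε)
          - x * Real.sqrt (γ^2-x^2) * Real.log ε := by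
        rw [Gin_eq_Gphi, (show x - (x-ε) = ε by ring)]
      rw [q1, q2]
      ring
    exact Tendsto.congr' (hev.mono fun ε h => h.symm) h4
end

section
/- Fix 0 < β < 1 and set x₁ := 1 + √(1−β), x₂ := −1 + √(1−β), and f(x) := 1/(x−x₁) − 1/(x−x₂). Then for every x ∈ (−1,1) with x ≠ x₂, the series ∑_{j∈ℤ, j≠0} (β/(x+2j)²)·f(−β/(x+2j)) converges absolutely and equals f(x); that is, T_β f = f on (−1,1)∖{x₂}, and f restricted to (−1,1) is a nonzero function belonging to weak-L¹ of (−1,1) (but not to L¹ of (−1,1)). -/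
open MeasureTheory Set Filter Topology

lemma key_alg (β x₁ x₂ y : ℝ) (hβ : β = -(x₁*x₂)) (hrel : x₁ = x₂ + 2)
    (hx1 : x₁ ≠ 0) (hx2 : x₂ ≠ 0) (hy : y ≠ 0) (h1 : y - x₂ ≠ 0) (h2 : y - x₁ ≠ 0) :
    β / y^2 * (1/(-β/y - x₁) - 1/(-β/y - x₂)) = 1/(y - x₂) - 1/(y - x₁) := by
  have e1 : -β/y - x₁ = -(x₁*(y - x₂))/y := by rw [hβ]; field_simp; ring
  have e2 : -β/y - x₂ = -(x₂*(y - x₁))/y := by rw [hβ, hrel]; field_simp; ring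
  have hd1 : -β/y - x₁ ≠ 0 := by rw [e1]; exact div_ne_zero (neg_ne_zero.2 (mul_ne_zero hx1 h1)) hy
  have hd2 : -β/y - x₂ ≠ 0 := by rw [e2]; exact div_ne_zero (neg_ne_zero.2 (mul_ne_zero hx2 h2)) hy
  rw [e1, e2] at *
  subst hβ hrel
  field_simp
  ring

set_option maxHeartbeats 1000000 in
/-- A nontrivial `T_β`-invariant function in weak-`L¹` of `(-1,1)`:
with `x₁ = 1 + √(1-β)`, `x₂ = -1 + √(1-β)` and `f(x) = 1/(x-x₁) - 1/(x-x₂)`, the series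
defining `T_β f(x)` converges absolutely to `f(x)` for `x ∈ (-1,1) \ {x₂}`; moreover `f`
restricted to `(-1,1)` is nonzero, lies in weak-`L¹(-1,1)`, but not in `L¹(-1,1)`. -/
theorem invariant_weakL1_function_exists
    (β : ℝ) (hβ0 : 0 < β) (hβ1 : β < 1)
    (x₁ x₂ : ℝ) (hx₁ : x₁ = 1 + Real.sqrt (1 - β)) (hx₂ : x₂ = -1 + Real.sqrt (1 - β))
    (f : ℝ → ℝ) (hf : ∀ x : ℝ, f x = 1 / (x - x₁) - 1 / (x - x₂)) :
    (∀ x ∈ Ioo (-1 : ℝ) 1, x ≠ x₂ →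
      Summable (fun j : {j : ℤ // j ≠ 0} =>
        |(β / (x + 2 * ((j : ℤ) : ℝ)) ^ 2) * f (-β / (x + 2 * ((j : ℤ) : ℝ)))|) ∧
      (∑' j : {j : ℤ // j ≠ 0},
        (β / (x + 2 * ((j : ℤ) : ℝ)) ^ 2) * f (-β / (x + 2 * ((j : ℤ) : ℝ)))) = f x) ∧
    (∃ x ∈ Ioo (-1 : ℝ) 1, f x ≠ 0) ∧
    (∃ C : ℝ, ∀ l : ℝ, 0 < l →
      l * (volume {t : ℝ | t ∈ Ioo (-1 : ℝ) 1 ∧ l < |f t|}).toReal ≤ C) ∧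
    ¬ IntegrableOn f (Ioo (-1 : ℝ) 1) := by
  have hs0 : (0:ℝ) < Real.sqrt (1 - β) := Real.sqrt_pos.2 (by linarith)
  have hsq : Real.sqrt (1 - β) ^ 2 = 1 - β := Real.sq_sqrt (by linarith)
  have hs1 : Real.sqrt (1 - β) < 1 := by nlinarith
  have hx₂neg : x₂ < 0 := by rw [hx₂]; linarith
  have hx₂gt : (-1:ℝ) < x₂ := by rw [hx₂]; linarith
  have hx₁gt : (1:ℝ) < x₁ := by rw [hx₁]; linarith
  have hx₁lt : x₁ < 2 := by rw [hx₁]; linarith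
  have hrel : x₁ = x₂ + 2 := by rw [hx₁, hx₂]; ring
  have hβeq : β = -(x₁ * x₂) := by rw [hx₁, hx₂]; nlinarith
  have hx1ne : x₁ ≠ 0 := by linarith
  have hx2ne : x₂ ≠ 0 := ne_of_lt hx₂neg
  refine ⟨?_, ?_, ?_, ?_⟩
  · -- invariance
    intro x hx hxne
    obtain ⟨hxl, hxr⟩ := hx
    set u : ℤ → ℝ := fun j => x - x₂ + 2*(j:ℝ) with hu
    have hu_ne : ∀ j : ℤ, u j ≠ 0 := by
      intro j
      rcases lt_trichotomy j 0 with hj | hj | hj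
      · have hj1 : j ≤ -1 := by omega
        have hj' : (j:ℝ) ≤ -1 := by exact_mod_cast hj1
        have : u j < 0 := by simp only [hu]; nlinarith
        linarith
      · subst hj; simpa [hu] using sub_ne_zero.2 hxne
      · have hj' : (1:ℝ) ≤ (j:ℝ) := by exact_mod_cast hj
        have : 0 < u j := by simp only [hu]; nlinarith
        linarith
    have hy_ne : ∀ j : ℤ, j ≠ 0 → x + 2*(j:ℝ) ≠ 0 := by
      intro j hj
      rcases lt_or_gt_of_ne hj with h | h
      · have hj1 : j ≤ -1 := by omega
        have hj' : (j:ℝ) ≤ -1 := by exact_mod_cast hj1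
        nlinarith
      · have hj' : (1:ℝ) ≤ (j:ℝ) := by exact_mod_cast h
        nlinarith
    set G : ℤ → ℝ := fun j => 1/(u j) - 1/(u (j-1)) with hG
    have hterm : ∀ j : ℤ, j ≠ 0 →
        (β / (x + 2 * (j:ℝ)) ^ 2) * f (-β / (x + 2 * (j:ℝ))) = G j := by
      intro j hj
      rw [hf]
      have h1 : x + 2*(j:ℝ) - x₂ = u j := by simp only [hu]; ring
      have h2 : x + 2*(j:ℝ) - x₁ = u (j-1) := by
        simp only [hu, hrel]; push_cast; ring
      have := key_alg β x₁ x₂ (x + 2*(j:ℝ)) hβeq hrel hx1ne hx2ne (hy_ne j hj)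
        (h1 ▸ hu_ne j) (h2 ▸ hu_ne (j-1))
      rw [h1, h2] at this
      exact this
    have hu_lb : ∀ j : ℤ, (3 ≤ j ∨ j ≤ -3) → |(j:ℝ)| ≤ |u j| := by
      intro j hj
      rcases hj with h | h
      · have hj' : (3:ℝ) ≤ (j:ℝ) := by exact_mod_cast h
        have h1 : (j:ℝ) ≤ u j := by simp only [hu]; nlinarith
        rw [abs_of_nonneg (by linarith : (0:ℝ) ≤ (j:ℝ)), abs_of_nonneg (by linarith)]
        linarith
      · have hj' : (j:ℝ) ≤ -3 := by exact_mod_cast h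
        have h1 : u j ≤ 2 + 2*(j:ℝ) := by simp only [hu]; nlinarith
        rw [abs_of_nonpos (by linarith : (j:ℝ) ≤ 0), abs_of_nonpos (by linarith)]
        linarith
    have hGsummable : Summable (fun j : ℤ => |G j|) := by
      apply Summable.of_norm_bounded_eventually (g := fun j : ℤ => 4 * (1/(j:ℝ)^2))
        (((Real.summable_one_div_int_pow (p := 2)).mpr one_lt_two).mul_left 4)
      rw [eventually_cofinite]
      apply Set.Finite.subset (Set.finite_Icc (-6:ℤ) 6)
      intro j hj
      simp only [Set.mem_setOf_eq, not_le] at hj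
      by_contra hjmem
      have hj6 : 6 ≤ j ∨ j ≤ -6 := by simp [Set.mem_Icc] at hjmem; omega
      apply absurd hj
      push_neg
      have hub1 : |(j:ℝ)| ≤ |u j| := hu_lb j (by omega)
      have hub2 : |((j:ℤ)-1:ℤ)| ≤ |u (j-1)| := by
        exact_mod_cast hu_lb (j-1) (by omega)
      have hJ6 : (6:ℝ) ≤ |(j:ℝ)| := by
        rcases hj6 with h | h
        · rw [abs_of_nonneg (by exact_mod_cast (by omega : (0:ℤ) ≤ j) : (0:ℝ) ≤ (j:ℝ))]
          exact_mod_cast h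
        · rw [abs_of_nonpos (by exact_mod_cast (by omega : j ≤ (0:ℤ)) : (j:ℝ) ≤ 0)]
          have : (j:ℝ) ≤ -6 := by exact_mod_cast h
          linarith
      have hJ1 : |(j:ℝ)| - 1 ≤ |((j:ℤ)-1:ℤ)| := by
        rcases hj6 with h | h
        · have h1 : (0:ℤ) ≤ j - 1 := by omega
          have h0 : (0:ℝ) ≤ (j:ℝ) := by exact_mod_cast (by omega : (0:ℤ) ≤ j)
          rw [abs_of_nonneg h0]
          push_cast [abs_of_nonneg h1]
          try linarith
        · have h1 : j - 1 ≤ (0:ℤ) := by omega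
          have h0 : (j:ℝ) ≤ 0 := by exact_mod_cast (by omega : j ≤ (0:ℤ))
          rw [abs_of_nonpos h0]
          push_cast [abs_of_nonpos h1]
          try linarith
      have hGexp : G j = -2 / (u j * u (j-1)) := by
        have hd : u (j-1) = u j - 2 := by simp only [hu]; push_cast; ring
        simp only [hG, hd]
        have h1 := hu_ne j
        have h2 : u j - 2 ≠ 0 := hd ▸ hu_ne (j-1)
        field_simp
        try ring
      have habs : |G j| = 2 / (|u j| * |u (j-1)|) := by
        rw [hGexp, abs_div, abs_neg, abs_mul]
        norm_num
      have hP : |(j:ℝ)| * (|(j:ℝ)| - 1) ≤ |u j| * |u (j-1)| := by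
        apply mul_le_mul hub1 (le_trans hJ1 hub2) (by linarith) (abs_nonneg _)
      have hPpos : (0:ℝ) < |u j| * |u (j-1)| := by nlinarith
      have hjne : (j:ℝ) ≠ 0 := by
        intro h0
        rw [h0, abs_zero] at hJ6
        linarith
      have hj2pos : (0:ℝ) < (j:ℝ)^2 := by positivity
      rw [Real.norm_eq_abs, abs_abs, habs]
      have h4 : (4:ℝ) * (1/(j:ℝ)^2) = 4 / (j:ℝ)^2 := by ring
      rw [h4, div_le_div_iff₀ hPpos hj2pos]
      have hq : 2 * (abs ((j:ℝ)))^2 ≤ 4 * ((abs ((j:ℝ))) * ((abs ((j:ℝ))) - 1)) := by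
        nlinarith
      have hsq' : (abs ((j:ℝ)))^2 = (j:ℝ)^2 := sq_abs _
      nlinarith
    constructor
    · refine (hGsummable.subtype {j : ℤ | j ≠ 0}).congr ?_
      intro p
      simp only [Function.comp_apply]
      rw [hterm p.1 p.2]
    · -- tsum computation
      have hGsum : Summable G := summable_abs_iff.mp hGsummable
      -- positive part
      have hNat : Summable (fun n : ℕ => G (n:ℤ)) :=
        hGsum.comp_injective (fun a b h => by exact_mod_cast h)
      have hNegS : Summable (fun n : ℕ => G (-((n:ℤ)+1))) :=
        hGsum.comp_injective (fun a b h => by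
          exact_mod_cast (by omega : -((a:ℤ)+1) = -((b:ℤ)+1) → (a:ℤ) = (b:ℤ)) h)
      have htendA : Tendsto (fun N : ℕ => 1/u ((N:ℤ) - 1)) atTop (𝓝 0) := by
        have h1 : (fun N : ℕ => u ((N:ℤ)-1)) = fun N : ℕ => (x - x₂ - 2) + 2*(N:ℝ) := by
          funext N; simp only [hu]; push_cast; ring
        have h2 : Tendsto (fun N : ℕ => u ((N:ℤ)-1)) atTop atTop := by
          rw [h1]
          exact tendsto_atTop_add_const_left _ _
            (tendsto_natCast_atTop_atTop.const_mul_atTop two_pos)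
        simpa [one_div, Pi.inv_def] using h2.inv_tendsto_atTop
      have htendB : Tendsto (fun N : ℕ => 1/u (-((N:ℤ)+1))) atTop (𝓝 0) := by
        have heq : ∀ N : ℕ, 1/u (-((N:ℤ)+1)) = -(((x₂ - x + 2) + 2*(N:ℝ))⁻¹) := by
          intro N
          have : u (-((N:ℤ)+1)) = -((x₂ - x + 2) + 2*(N:ℝ)) := by
            simp only [hu]; push_cast; ring
          rw [this, one_div, inv_neg]
        have h2 : Tendsto (fun N : ℕ => (x₂ - x + 2) + 2*(N:ℝ)) atTop atTop :=
          tendsto_atTop_add_const_left _ _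
            (tendsto_natCast_atTop_atTop.const_mul_atTop two_pos)
        have h3 := h2.inv_tendsto_atTop.neg
        rw [neg_zero] at h3
        exact h3.congr (fun N => (heq N).symm)
      have hps1 : ∀ N : ℕ, ∑ n ∈ Finset.range N, G (n:ℤ) = 1/u ((N:ℤ)-1) - 1/u ((0:ℤ)-1) := by
        intro N
        have h := Finset.sum_range_sub (fun n : ℕ => 1/u ((n:ℤ)-1)) N
        simp only [Nat.cast_zero] at h
        rw [← h]
        apply Finset.sum_congr rfl
        intro n _
        have e1 : ((n+1:ℕ):ℤ) - 1 = (n:ℤ) := by push_cast; ring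
        simp only [hG, e1]
      have hps2 : ∀ N : ℕ, ∑ n ∈ Finset.range N, G (-((n:ℤ)+1))
          = 1/u (-((0:ℤ)+1)) - 1/u (-((N:ℤ)+1)) := by
        intro N
        have h := Finset.sum_range_sub' (fun n : ℕ => 1/u (-((n:ℤ)+1))) N
        simp only [Nat.cast_zero] at h
        rw [← h]
        apply Finset.sum_congr rfl
        intro n _
        have e1 : -((n:ℤ)+1) - 1 = -(((n+1:ℕ):ℤ)+1) := by push_cast; ring
        simp only [hG, e1]
      have hS1 : HasSum (fun n : ℕ => G (n:ℤ)) (0 - 1/u ((0:ℤ)-1)) := by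
        have ht := hNat.hasSum.tendsto_sum_nat
        have ht2 : Tendsto (fun N : ℕ => ∑ n ∈ Finset.range N, G (n:ℤ)) atTop
            (𝓝 (0 - 1/u ((0:ℤ)-1))) :=
          (htendA.sub tendsto_const_nhds).congr (fun N => (hps1 N).symm)
        exact (tendsto_nhds_unique ht ht2) ▸ hNat.hasSum
      have hS2 : HasSum (fun n : ℕ => G (-((n:ℤ)+1))) (1/u (-((0:ℤ)+1)) - 0) := by
        have ht := hNegS.hasSum.tendsto_sum_nat
        have ht2 : Tendsto (fun N : ℕ => ∑ n ∈ Finset.range N, G (-((n:ℤ)+1))) atTop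
            (𝓝 (1/u (-((0:ℤ)+1)) - 0)) :=
          (tendsto_const_nhds.sub htendB).congr (fun N => (hps2 N).symm)
        exact (tendsto_nhds_unique ht ht2) ▸ hNegS.hasSum
      have htot : HasSum G ((0 - 1/u ((0:ℤ)-1)) + (1/u (-((0:ℤ)+1)) - 0)) :=
        HasSum.of_nat_of_neg_add_one hS1 hS2
      have hG0 : HasSum G 0 := by
        have e : ((0:ℝ) - 1/u ((0:ℤ)-1)) + (1/u (-((0:ℤ)+1)) - 0) = 0 := by norm_num
        rwa [e] at htot
      have hsplit := hG0.summable.tsum_subtype_add_tsum_subtype_compl ({0} : Set ℤ)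
      rw [hG0.tsum_eq, tsum_singleton] at hsplit
      have hfx : f x = -(G 0) := by
        rw [hf]
        have e0 : u 0 = x - x₂ := by simp [hu]
        have em1 : u (0-1) = x - x₁ := by
          simp only [hu, hrel]; push_cast; ring
        simp only [hG, e0, em1]
        ring
      rw [tsum_congr (fun p : {j : ℤ // j ≠ 0} => hterm p.1 p.2)]
      have hequiv : ∑' p : {j : ℤ // j ≠ 0}, G ↑p = ∑' q : ↑(({0} : Set ℤ)ᶜ), G ↑q :=
        (Equiv.subtypeEquivRight (fun j => by simp)).tsum_eq (fun q : ↑(({0}:Set ℤ)ᶜ) => G ↑q)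
      rw [hequiv]
      linarith [hsplit, hfx]
  · -- nonzero at 0
    refine ⟨0, by constructor <;> norm_num, ?_⟩
    rw [hf]
    have h1 : 1/(0 - x₁) < 0 := by apply one_div_neg.2; linarith
    have h2 : 0 < 1/(0 - x₂) := by apply one_div_pos.2; linarith
    intro h
    rw [sub_eq_zero] at h
    rw [h] at h1
    linarith
  · -- weak L1
    refine ⟨4/Real.sqrt (1-β) + 6, ?_⟩
    intro l hl
    set S := {t : ℝ | t ∈ Ioo (-1:ℝ) 1 ∧ l < |f t|} with hS
    have hAnn : (0:ℝ) ≤ 4/Real.sqrt (1-β) := by positivity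
    by_cases hcase : l ≤ 2/Real.sqrt (1-β) + 1
    · have h1 : volume S ≤ volume (Ioo (-1:ℝ) 1) := measure_mono (fun t ht => ht.1)
      have h2 : volume (Ioo (-1:ℝ) 1) = ENNReal.ofReal 2 := by
        rw [Real.volume_Ioo]; norm_num
      have h3 : (volume S).toReal ≤ 2 :=
        ENNReal.toReal_le_of_le_ofReal (by norm_num) (h2 ▸ h1)
      have h4 : l * (volume S).toReal ≤ l * 2 :=
        mul_le_mul_of_nonneg_left h3 hl.le
      have h5 : l * 2 ≤ (2/Real.sqrt (1-β) + 1) * 2 :=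
        mul_le_mul_of_nonneg_right hcase (by norm_num)
      have h6 : (2/Real.sqrt (1-β) + 1) * 2 = 4/Real.sqrt (1-β) + 2 := by ring
      linarith
    · push_neg at hcase
      have hsub : S ⊆ Metric.ball x₂ (2/l) := by
        rintro t ⟨⟨ht1, ht2⟩, htl⟩
        have hb1 : |1/(t - x₁)| ≤ 1/Real.sqrt (1-β) := by
          have hpos : 0 < x₁ - t := by linarith
          rw [abs_div, abs_one, abs_sub_comm, abs_of_pos hpos]
          apply one_div_le_one_div_of_le hs0
          rw [hx₁]; linarith
        have htabs : l < |1/(t-x₁)| + |1/(t-x₂)| := by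
          calc l < |f t| := htl
            _ ≤ _ := by rw [hf]; exact abs_sub _ _
        have h5 : 1/Real.sqrt (1-β) < l/2 := by
          have : 2/Real.sqrt (1-β) = 2 * (1/Real.sqrt (1-β)) := by ring
          linarith
        have h6 : l/2 < |1/(t-x₂)| := by linarith
        have h7 : |1/(t-x₂)| = 1/|t - x₂| := by rw [abs_div, abs_one]
        have h8 : t - x₂ ≠ 0 := by
          intro h0
          rw [h7, h0] at h6
          simp at h6
          linarith
        have h9 : 0 < |t - x₂| := abs_pos.2 h8
        rw [h7, div_lt_div_iff₀ two_pos h9] at h6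
        rw [Metric.mem_ball, Real.dist_eq, lt_div_iff₀ hl]
        linarith
      have h1 : volume S ≤ ENNReal.ofReal (2*(2/l)) := by
        calc volume S ≤ volume (Metric.ball x₂ (2/l)) := measure_mono hsub
          _ = ENNReal.ofReal (2*(2/l)) := Real.volume_ball x₂ _
      have h3 : (volume S).toReal ≤ 2*(2/l) :=
        ENNReal.toReal_le_of_le_ofReal (by positivity) h1
      have h4 : l * (volume S).toReal ≤ l * (2*(2/l)) :=
        mul_le_mul_of_nonneg_left h3 hl.le
      have hll : l * (2*(2/l)) = 4 := by
        field_simp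
        norm_num
      linarith
  · -- not integrable
    intro h
    have hint1 : IntervalIntegrable (fun t => (t - x₁)⁻¹) volume (-1) 1 := by
      rw [intervalIntegrable_sub_inv_iff]
      right
      intro hc
      rw [Set.mem_uIcc] at hc
      rcases hc with ⟨_, h2⟩ | ⟨h2, _⟩ <;> linarith
    have hint1' : IntegrableOn (fun t => (t - x₁)⁻¹) (Ioo (-1:ℝ) 1) :=
      (intervalIntegrable_iff_integrableOn_Ioo_of_le (by norm_num)).mp hint1
    have h2 : IntegrableOn (fun t => (t - x₂)⁻¹) (Ioo (-1:ℝ) 1) := by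
      have h3 := hint1'.sub h
      have h4 : ((fun t => (t - x₁)⁻¹) - f) = fun t => (t - x₂)⁻¹ := by
        funext t
        simp only [Pi.sub_apply]
        rw [hf]
        simp only [one_div]
        ring
      rwa [h4] at h3
    have h5 : IntervalIntegrable (fun t => (t - x₂)⁻¹) volume (-1) 1 :=
      (intervalIntegrable_iff_integrableOn_Ioo_of_le (by norm_num)).mpr h2
    rw [intervalIntegrable_sub_inv_iff] at h5
    rcases h5 with h5 | h5
    · norm_num at h5
    · exact h5 (Set.mem_uIcc.mpr (Or.inl ⟨by linarith, by linarith⟩))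
end
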